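/- arXiv:1711.05640 — 4 statements merged into one kernel-verified Lean document; each statement's English description precedes it below -/
import Mathlib

section
/- Under the hypotheses of the contraction result (μ of the Jacobian of F bounded by c on a convex invariant set), if x₁(t), x₂(t) are solutions with x₁(t₀) − x₂(t₀) outside the measure-zero set S where the norm fails to be differentiable, then d/dt |x₁(t) − x₂(t)| evaluated at t = t₀ is at most c |x₁(t₀) − x₂(t₀)|. -/
open Filter Set MeasureTheory

/-- `N` is a norm on `ℝⁿ`. -/
def IsNorm {n : ℕ} (N : (Fin n → ℝ) → ℝ) : Prop :=
  (∀ x, N x = 0 ↔ x = 0) ∧ (∀ (c : ℝ) x, N (c • x) = |c| * N x) ∧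
    (∀ x y, N (x + y) ≤ N x + N y)


namespace IsNorm
variable {n : ℕ} {N : (Fin n → ℝ) → ℝ} (hN : IsNorm N)
include hN

lemma zero' : N 0 = 0 := (hN.1 0).2 rfl

lemma nonneg (x : Fin n → ℝ) : 0 ≤ N x := by
  have h := hN.2.2 x (-x)
  have h2 : N (-x) = N x := by
    have := hN.2.1 (-1) x
    simpa using this
  have : (0:ℝ) ≤ N x + N x := by
    have hx0 : N (x + -x) = 0 := by simp [hN.zero']
    rw [hx0] at h; linarith [h, h2]
  linarith

lemma pos {x : Fin n → ℝ} (hx : x ≠ 0) : 0 < N x :=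
  lt_of_le_of_ne (hN.nonneg x) (fun h => hx ((hN.1 x).1 h.symm))

lemma le_const_mul : ∃ C : ℝ, 0 < C ∧ ∀ x, N x ≤ C * ‖x‖ := by
  set e : Fin n → (Fin n → ℝ) := fun i => Pi.single i (1:ℝ) with he
  refine ⟨(∑ i, N (e i)) + 1, by
    have := Finset.sum_nonneg (fun i (_: i ∈ Finset.univ) => hN.nonneg (e i)); linarith,
    fun x => ?_⟩
  have hx : x = ∑ i, x i • e i := by
    ext j; simp [he, Pi.single_apply]
  calc N x = N (∑ i, x i • e i) := by rw [← hx]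
    _ ≤ ∑ i, N (x i • e i) :=
        Finset.le_sum_of_subadditive N hN.zero'.le hN.2.2 _ _
    _ = ∑ i, |x i| * N (e i) := by simp [hN.2.1]
    _ ≤ ∑ i, ‖x‖ * N (e i) := by
        refine Finset.sum_le_sum fun i _ => ?_
        exact mul_le_mul_of_nonneg_right (by
          simpa using norm_le_pi_norm x i) (hN.nonneg _)
    _ = (∑ i, N (e i)) * ‖x‖ := by rw [Finset.sum_mul]; exact Finset.sum_congr rfl fun i _ => mul_comm _ _
    _ ≤ _ := by nlinarith [norm_nonneg x, Finset.sum_nonneg (fun i (_: i ∈ Finset.univ) => hN.nonneg (e i))]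

lemma continuous : Continuous N := by
  obtain ⟨C, hC, hCb⟩ := hN.le_const_mul
  have : LipschitzWith (Real.toNNReal C) N := by
    refine LipschitzWith.of_dist_le_mul fun x y => ?_
    have h1 : N x ≤ N y + N (x - y) := by
      have h := hN.2.2 (x - y) y; simp only [sub_add_cancel] at h; linarith
    have h2 : N y ≤ N x + N (x - y) := by
      have := hN.2.2 (y - x) x
      have hnn : N (y - x) = N (x - y) := by
        have := hN.2.1 (-1) (x - y); simpa [neg_sub] using this
      simp only [sub_add_cancel] at this
      linarith [this]
    have : |N x - N y| ≤ N (x - y) := abs_sub_le_iff.2 ⟨by linarith, by linarith⟩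
    calc dist (N x) (N y) = |N x - N y| := rfl
      _ ≤ N (x - y) := this
      _ ≤ C * ‖x - y‖ := hCb _
      _ = Real.toNNReal C * dist x y := by
          rw [dist_eq_norm, Real.coe_toNNReal _ hC.le]
  exact this.continuous

lemma const_mul_le (hn : 0 < n) : ∃ m : ℝ, 0 < m ∧ ∀ x, m * ‖x‖ ≤ N x := by
  have : Nontrivial (Fin n → ℝ) := by
    refine ⟨0, Pi.single (⟨0, hn⟩ : Fin n) (1:ℝ), fun h => ?_⟩
    have := congrFun h ⟨0, hn⟩
    simp at this
  have hsph : (Metric.sphere (0 : Fin n → ℝ) 1).Nonempty :=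
    NormedSpace.sphere_nonempty.2 zero_le_one
  obtain ⟨x₀, hx₀s, hx₀m⟩ := (isCompact_sphere (0 : Fin n → ℝ) 1).exists_isMinOn
    hsph hN.continuous.continuousOn
  have hx₀ : x₀ ≠ 0 := by
    intro h; rw [h] at hx₀s; simp at hx₀s
  refine ⟨N x₀, hN.pos hx₀, fun x => ?_⟩
  rcases eq_or_ne x 0 with rfl | hx
  · simp [hN.zero']
  · have hxn : ‖x‖ ≠ 0 := norm_ne_zero_iff.2 hx
    have hu : (‖x‖⁻¹ • x) ∈ Metric.sphere (0 : Fin n → ℝ) 1 := by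
      simp [norm_smul, abs_of_nonneg (norm_nonneg x), inv_mul_cancel₀ hxn]
    have hmin : N x₀ ≤ N (‖x‖⁻¹ • x) := hx₀m hu
    have heq : N (‖x‖⁻¹ • x) = ‖x‖⁻¹ * N x := by
      rw [hN.2.1]; congr 1; rw [abs_of_nonneg (by positivity)]
    rw [heq] at hmin
    have hpos : (0:ℝ) < ‖x‖ := by positivity
    have h2 : ‖x‖ * N x₀ ≤ ‖x‖ * (‖x‖⁻¹ * N x) :=
      mul_le_mul_of_nonneg_left hmin hpos.le
    have h3 : ‖x‖ * (‖x‖⁻¹ * N x) = N x := by field_simp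
    nlinarith
end IsNorm


/-- The matrix norm induced by the vector norm `N`. -/
noncomputable def opNorm {n : ℕ} (N : (Fin n → ℝ) → ℝ)
    (A : Matrix (Fin n) (Fin n) ℝ) : ℝ :=
  sSup ((fun x => N (A.mulVec x)) '' {x | N x = 1})


lemma bddAbove_aux {n : ℕ} {N : (Fin n → ℝ) → ℝ} (hN : IsNorm N) (hn : 0 < n)
    (A : Matrix (Fin n) (Fin n) ℝ) :
    BddAbove ((fun x => N (A.mulVec x)) '' {x | N x = 1}) := by
  obtain ⟨C, hC, hCb⟩ := hN.le_const_mul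
  obtain ⟨m, hm, hmb⟩ := hN.const_mul_le hn
  set L := A.mulVecLin.toContinuousLinearMap with hL
  refine ⟨C * ‖L‖ * m⁻¹, fun y hy => ?_⟩
  obtain ⟨x, hx1, rfl⟩ := hy
  have hxn : ‖x‖ ≤ m⁻¹ := by
    have := hmb x
    rw [Set.mem_setOf_eq] at hx1
    rw [hx1] at this
    rw [← one_div]
    rw [le_div_iff₀ hm]
    linarith
  calc N (A.mulVec x) ≤ C * ‖A.mulVec x‖ := hCb _
    _ = C * ‖L x‖ := by rfl
    _ ≤ C * (‖L‖ * ‖x‖) := by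
        exact mul_le_mul_of_nonneg_left (L.le_opNorm x) hC.le
    _ ≤ C * (‖L‖ * m⁻¹) := by
        refine mul_le_mul_of_nonneg_left ?_ hC.le
        exact mul_le_mul_of_nonneg_left hxn (norm_nonneg L)
    _ = C * ‖L‖ * m⁻¹ := by ring

lemma mulVec_le_opNorm {n : ℕ} {N : (Fin n → ℝ) → ℝ} (hN : IsNorm N) (hn : 0 < n)
    (A : Matrix (Fin n) (Fin n) ℝ) (x : Fin n → ℝ) :
    N (A.mulVec x) ≤ opNorm N A * N x := by
  rcases eq_or_ne x 0 with rfl | hx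
  · simp [Matrix.mulVec_zero, hN.zero']
  · have hNx : 0 < N x := hN.pos hx
    set u := (N x)⁻¹ • x with hu
    have hNu : N u = 1 := by
      rw [hu, hN.2.1, abs_of_nonneg (by positivity), inv_mul_cancel₀ hNx.ne']
    have hmem : N (A.mulVec u) ∈ (fun x => N (A.mulVec x)) '' {x | N x = 1} :=
      ⟨u, hNu, rfl⟩
    have hle : N (A.mulVec u) ≤ opNorm N A :=
      le_csSup (bddAbove_aux hN hn A) hmem
    have hAu : N (A.mulVec u) = (N x)⁻¹ * N (A.mulVec x) := by
      rw [hu, Matrix.mulVec_smul, hN.2.1, abs_of_nonneg (by positivity)]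
    rw [hAu] at hle
    calc N (A.mulVec x) = N x * ((N x)⁻¹ * N (A.mulVec x)) := by field_simp
      _ ≤ N x * opNorm N A := mul_le_mul_of_nonneg_left hle hNx.le
      _ = opNorm N A * N x := mul_comm _ _


/-- `m` is the matrix measure of `A` induced by the vector norm `N`. -/
def HasMatrixMeasure {n : ℕ} (N : (Fin n → ℝ) → ℝ)
    (A : Matrix (Fin n) (Fin n) ℝ) (m : ℝ) : Prop :=
  Tendsto (fun h : ℝ => (opNorm N (1 + h • A) - 1) / h)
    (nhdsWithin 0 (Ioi 0)) (nhds m)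


lemma key_directional {n : ℕ} {N : (Fin n → ℝ) → ℝ} (hN : IsNorm N) (hn : 0 < n)
    {z : Fin n → ℝ} {φ : (Fin n → ℝ) →L[ℝ] ℝ} (hφ : HasFDerivAt N φ z)
    {A : Matrix (Fin n) (Fin n) ℝ} {m : ℝ} (hA : HasMatrixMeasure N A m) :
    φ (A.mulVec z) ≤ m * N z := by
  set w := A.mulVec z with hw
  -- slope tendsto
  have hline : HasDerivAt (fun h : ℝ => z + h • w) w 0 := by
    have h1 : HasDerivAt (fun h : ℝ => h • w) ((1:ℝ) • w) 0 :=
      (hasDerivAt_id (0:ℝ)).smul_const w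
    simpa using h1.const_add z
  have hcomp : HasDerivAt (fun h : ℝ => N (z + h • w)) (φ w) 0 := by
    have hφ' : HasFDerivAt N φ (z + (0:ℝ) • w) := by simpa using hφ
    have := hφ'.comp_hasDerivAt (0:ℝ) hline
    simpa [Function.comp_def] using this
  have hslope : Tendsto (fun h : ℝ => (N (z + h • w) - N z) / h)
      (nhdsWithin 0 (Ioi 0)) (nhds (φ w)) := by
    have h1 := hasDerivAt_iff_tendsto_slope.1 hcomp
    have h2 : Tendsto (slope (fun h : ℝ => N (z + h • w)) 0)
        (nhdsWithin 0 (Ioi 0)) (nhds (φ w)) :=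
      h1.mono_left (nhdsWithin_mono 0 (fun x hx => ne_of_gt hx))
    refine h2.congr' ?_
    filter_upwards [self_mem_nhdsWithin] with h hh
    rw [slope_def_field]
    simp [div_eq_inv_mul]
  -- RHS tendsto
  have hrhs : Tendsto (fun h : ℝ => (opNorm N (1 + h • A) - 1) / h * N z)
      (nhdsWithin 0 (Ioi 0)) (nhds (m * N z)) := hA.mul_const (N z)
  -- eventual inequality
  have hineq : ∀ᶠ h in nhdsWithin (0:ℝ) (Ioi 0),
      (N (z + h • w) - N z) / h ≤ (opNorm N (1 + h • A) - 1) / h * N z := by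
    filter_upwards [self_mem_nhdsWithin] with h (hh : 0 < h)
    have hid : (1 + h • A).mulVec z = z + h • w := by
      simp [Matrix.add_mulVec, Matrix.one_mulVec, Matrix.smul_mulVec, hw]
    have hb : N (z + h • w) ≤ opNorm N (1 + h • A) * N z := by
      rw [← hid]; exact mulVec_le_opNorm hN hn _ z
    rw [div_mul_eq_mul_div]
    apply div_le_div_of_nonneg_right _ hh.le
    nlinarith [hN.nonneg z]
  exact le_of_tendsto_of_tendsto hslope hrhs hineq


/-- under the contraction hypotheses (μ of the Jacobian of `F`
bounded by `c` on a convex invariant set), if `x₁(t₀) − x₂(t₀)` lies outside the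
measure-zero set `S` where the norm fails to be differentiable, then
`d/dt |x₁(t) − x₂(t)|` at `t = t₀` is at most `c |x₁(t₀) − x₂(t₀)|`. -/
theorem deriv_of_norm_of_difference_le (n : ℕ) (hn : 0 < n)
    (N : (Fin n → ℝ) → ℝ) (hN : IsNorm N)
    (S : Set (Fin n → ℝ)) (hS : volume S = 0)
    (hNd : ∀ z ∉ S, DifferentiableAt ℝ N z)
    (X : Set (Fin n → ℝ)) (hX : Convex ℝ X)
    (F : ℝ → (Fin n → ℝ) → (Fin n → ℝ))
    (J : ℝ → (Fin n → ℝ) → Matrix (Fin n) (Fin n) ℝ)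
    (hFc : ContinuousOn (fun p : ℝ × (Fin n → ℝ) => F p.1 p.2) (Ici 0 ×ˢ X))
    (hJc : ContinuousOn (fun p : ℝ × (Fin n → ℝ) => J p.1 p.2) (Ici 0 ×ˢ X))
    (hFd : ∀ t, 0 ≤ t → ∀ x ∈ X,
      HasFDerivWithinAt (F t) ((J t x).mulVecLin.toContinuousLinearMap) X x)
    (c : ℝ)
    (hμ : ∀ t, 0 ≤ t → ∀ x ∈ X,
      ∃ m : ℝ, HasMatrixMeasure N (J t x) m ∧ m ≤ c)
    (x₁ x₂ : ℝ → (Fin n → ℝ)) (t₀ : ℝ) (ht₀ : 0 ≤ t₀)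
    (hx₁ : ∀ t, t₀ ≤ t → HasDerivAt x₁ (F t (x₁ t)) t ∧ x₁ t ∈ X)
    (hx₂ : ∀ t, t₀ ≤ t → HasDerivAt x₂ (F t (x₂ t)) t ∧ x₂ t ∈ X)
    (hS₀ : x₁ t₀ - x₂ t₀ ∉ S) :
    deriv (fun t => N (x₁ t - x₂ t)) t₀ ≤ c * N (x₁ t₀ - x₂ t₀) := by
  set z := x₁ t₀ - x₂ t₀ with hzdef
  have hzX₁ : x₁ t₀ ∈ X := (hx₁ t₀ le_rfl).2
  have hzX₂ : x₂ t₀ ∈ X := (hx₂ t₀ le_rfl).2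
  have hdiff : DifferentiableAt ℝ N z := hNd z hS₀
  -- z ≠ 0 : otherwise N would be differentiable at 0, contradicting positivity
  have hz0 : z ≠ 0 := by
    intro h
    have hdiff0 : DifferentiableAt ℝ N 0 := h ▸ hdiff
    set w : Fin n → ℝ := Pi.single ⟨0, hn⟩ 1 with hwdef
    have hw0 : w ≠ 0 := by
      intro hc; have := congrFun hc ⟨0, hn⟩; simp [hwdef] at this
    have hNw : 0 < N w := hN.pos hw0
    have hlin : DifferentiableAt ℝ (fun s : ℝ => s • w) 0 :=
      (differentiable_id.smul_const w).differentiableAt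
    have h1 : DifferentiableAt ℝ (fun s : ℝ => N (s • w)) 0 := by
      have hdiff0' : DifferentiableAt ℝ N ((0:ℝ) • w) := by simpa using hdiff0
      have := hdiff0'.comp 0 hlin
      simpa [Function.comp_def] using this
    have h2 : (fun s : ℝ => |s|) = fun s : ℝ => N (s • w) * (N w)⁻¹ := by
      ext s; rw [hN.2.1]; field_simp
    have h3 : DifferentiableAt ℝ (fun s : ℝ => |s|) 0 := by
      rw [h2]; exact h1.mul_const _
    exact not_differentiableAt_abs_zero h3
  set v := F t₀ (x₁ t₀) - F t₀ (x₂ t₀) with hvdef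
  have hg : HasDerivAt (fun t => x₁ t - x₂ t) v t₀ :=
    ((hx₁ t₀ le_rfl).1).sub ((hx₂ t₀ le_rfl).1)
  set φ := fderiv ℝ N z with hφdef
  have hφ : HasFDerivAt N φ z := hdiff.hasFDerivAt
  have hDeriv : deriv (fun t => N (x₁ t - x₂ t)) t₀ = φ v := by
    have h := hφ.comp_hasDerivAt t₀ hg
    exact h.deriv
  rw [hDeriv]
  -- segment from x₂ t₀ to x₁ t₀
  set γ : ℝ → (Fin n → ℝ) := fun s => x₂ t₀ + s • z with hγdef
  have hγX : ∀ s ∈ Icc (0:ℝ) 1, γ s ∈ X := by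
    intro s hs
    have h := hX hzX₂ hzX₁ (sub_nonneg.2 hs.2) hs.1 (by ring)
    have : γ s = (1 - s) • x₂ t₀ + s • x₁ t₀ := by
      simp only [hγdef, hzdef]
      module
    rw [this]; exact h
  have hγc : Continuous γ := by
    simp only [hγdef]; continuity
  have hγd : ∀ s : ℝ, HasDerivAt γ z s := by
    intro s
    have h1 : HasDerivAt (fun s : ℝ => s • z) ((1:ℝ) • z) s :=
      (hasDerivAt_id s).smul_const z
    simpa [hγdef] using h1.const_add (x₂ t₀)
  set d : ℝ → (Fin n → ℝ) := fun s => (J t₀ (γ s)).mulVec z with hddef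
  have hcm : Continuous (fun M : Matrix (Fin n) (Fin n) ℝ => M.mulVec z) := by
    refine continuous_pi fun i => ?_
    simp only [Matrix.mulVec, dotProduct]
    exact continuous_finset_sum _ fun j _ =>
      Continuous.mul (f := fun a : Matrix (Fin n) (Fin n) ℝ => a i j)
        ((continuous_apply j).comp (continuous_apply i)) continuous_const
  have hmapsto : ∀ s ∈ Icc (0:ℝ) 1, (t₀, γ s) ∈ Ici (0:ℝ) ×ˢ X :=
    fun s hs => ⟨ht₀, hγX s hs⟩
  have hdc : ContinuousOn d (Icc 0 1) := by
    refine hcm.comp_continuousOn ?_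
    exact hJc.comp ((continuous_const.prodMk hγc).continuousOn) hmapsto
  have hdint : IntervalIntegrable d volume 0 1 := by
    apply ContinuousOn.intervalIntegrable
    rwa [uIcc_of_le zero_le_one]
  have hψc : ContinuousOn (fun s => F t₀ (γ s)) (Icc 0 1) :=
    hFc.comp ((continuous_const.prodMk hγc).continuousOn) hmapsto
  have hψd : ∀ s ∈ Ioo (0:ℝ) 1,
      HasDerivWithinAt (fun s => F t₀ (γ s)) (d s) (Ioi s) s := by
    intro s hs
    have hF := hFd t₀ ht₀ (γ s) (hγX s ⟨hs.1.le, hs.2.le⟩)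
    have hγw : HasDerivWithinAt γ z (Icc 0 1) s := (hγd s).hasDerivWithinAt
    have hmt : MapsTo γ (Icc 0 1) X := fun u hu => hγX u hu
    have h := hF.comp_hasDerivWithinAt s hγw hmt
    have h2 : HasDerivWithinAt (fun s => F t₀ (γ s)) (d s) (Icc 0 1) s := by
      simpa [hddef, Function.comp_def] using h
    exact h2.mono_of_mem_nhdsWithin (Icc_mem_nhdsGT_of_mem ⟨hs.1.le, hs.2⟩)
  have hMVT : v = ∫ s in (0:ℝ)..1, d s := by
    rw [intervalIntegral.integral_eq_sub_of_hasDeriv_right_of_le zero_le_one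
      hψc hψd hdint]
    have e1 : γ 1 = x₁ t₀ := by simp [hγdef, hzdef]
    have e0 : γ 0 = x₂ t₀ := by simp [hγdef]
    rw [e1, e0]
  have hφv : φ v = ∫ s in (0:ℝ)..1, φ (d s) := by
    rw [hMVT]
    exact (ContinuousLinearMap.intervalIntegral_comp_comm φ hdint).symm
  rw [hφv]
  have hbound : ∀ s ∈ Icc (0:ℝ) 1, φ (d s) ≤ c * N z := by
    intro s hs
    obtain ⟨m, hm1, hm2⟩ := hμ t₀ ht₀ (γ s) (hγX s hs)
    calc φ (d s) ≤ m * N z := key_directional hN hn hφ hm1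
      _ ≤ c * N z := mul_le_mul_of_nonneg_right hm2 (hN.nonneg z)
  have hφint : IntervalIntegrable (fun s => φ (d s)) volume 0 1 := by
    apply ContinuousOn.intervalIntegrable
    rw [uIcc_of_le zero_le_one]
    exact φ.continuous.comp_continuousOn hdc
  calc (∫ s in (0:ℝ)..1, φ (d s)) ≤ ∫ _ in (0:ℝ)..1, c * N z := by
        apply intervalIntegral.integral_mono_on zero_le_one hφint
          intervalIntegrable_const hbound
    _ = c * N z := by simp
end

section
/- Let G : ℝⁿ → ℝ be locally Lipschitz, differentiable off a measure-zero set S. Then the Clarke generalized directional derivative G°(x;v) = limsup_{z→x, h→0⁺} (G(z+hv) − G(z))/h equals limsup_{z→x, z∉S} ∇G(z)·v. -/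
open Filter Set MeasureTheory

lemma slope_tendsto_right {g : ℝ → ℝ} {d a : ℝ} (h : HasDerivAt g d a) :
    Tendsto (fun ε => (g (a + ε) - g a) / ε) (nhdsWithin (0:ℝ) (Ioi 0)) (nhds d) := by
  have h1 : Tendsto (fun ε : ℝ => a + ε) (nhdsWithin (0:ℝ) (Ioi 0)) (nhdsWithin a {a}ᶜ) := by
    apply tendsto_nhdsWithin_of_tendsto_nhds_of_eventually_within
    · have : Tendsto (fun ε : ℝ => a + ε) (nhds 0) (nhds (a + 0)) :=
        tendsto_const_nhds.add tendsto_id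
      simpa using this.mono_left nhdsWithin_le_nhds
    · filter_upwards [self_mem_nhdsWithin] with ε hε
      simp only [mem_compl_iff, mem_singleton_iff]
      have : (0:ℝ) < ε := hε
      linarith
  have h2 := (hasDerivAt_iff_tendsto_slope.1 h).comp h1
  refine h2.congr fun ε => ?_
  simp [slope_def_field, Function.comp]

lemma abs_deriv_le_of_lipschitz {g : ℝ → ℝ} {K : NNReal} (hg : LipschitzWith K g) (t : ℝ) :
    |deriv g t| ≤ K := by
  by_cases hd : DifferentiableAt ℝ g t
  · have h1 := hasDerivAt_iff_tendsto_slope.1 hd.hasDerivAt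
    have h2 : Tendsto (fun y => |slope g t y|) (nhdsWithin t {t}ᶜ) (nhds |deriv g t|) :=
      h1.abs
    refine le_of_tendsto h2 ?_
    filter_upwards [self_mem_nhdsWithin] with y hy
    have hy' : y ≠ t := hy
    rw [slope_def_field, abs_div]
    rw [div_le_iff₀ (abs_pos.2 (sub_ne_zero.2 hy'))]
    have := hg.dist_le_mul y t
    simpa [Real.dist_eq] using this
  · simp [deriv_zero_of_not_differentiableAt hd]

lemma lipschitz_sub_le_of_ae_deriv_le {g : ℝ → ℝ} {K : NNReal} (hg : LipschitzWith K g)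
    {c b : ℝ} (hb : 0 ≤ b)
    (hd : ∀ᵐ t, t ∈ Set.Ioo 0 b → DifferentiableAt ℝ g t ∧ deriv g t ≤ c) :
    g b - g 0 ≤ c * b := by
  rcases eq_or_lt_of_le hb with rfl | hb
  · simp
  have hcont := hg.continuous
  have hint : ∀ a b : ℝ, IntervalIntegrable g volume a b := fun a b =>
    hcont.intervalIntegrable a b
  set μ := volume.restrict (Set.Ioc (0:ℝ) b) with hμ
  have hμfin : μ Set.univ < ⊤ := by
    rw [hμ, Measure.restrict_apply_univ, Real.volume_Ioc]
    exact ENNReal.ofReal_lt_top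
  -- a.e. in μ membership in Ioo
  have hIoo : ∀ᵐ t ∂μ, t ∈ Set.Ioo 0 b := by
    have hb' : ∀ᵐ t : ℝ, t ≠ b := by
      have hs : {t : ℝ | ¬ t ≠ b} = {b} := by ext t; simp
      rw [ae_iff, hs]; exact Real.volume_singleton
    rw [hμ, ae_restrict_iff' measurableSet_Ioc]
    filter_upwards [hb'] with t ht htmem
    exact ⟨htmem.1, lt_of_le_of_ne htmem.2 ht⟩
  have hdμ : ∀ᵐ t ∂μ, DifferentiableAt ℝ g t ∧ deriv g t ≤ c := by
    filter_upwards [hIoo, ae_restrict_of_ae hd] with t h1 h2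
    exact h2 h1
  -- Step 1: identity for the integral of difference quotients
  have key : ∀ ε : ℝ, ε ≠ 0 → (∫ t in (0:ℝ)..b, (g (t + ε) - g t) / ε)
      = ((∫ t in b..(b+ε), g t) - ∫ t in (0:ℝ)..ε, g t) / ε := by
    intro ε hε
    rw [intervalIntegral.integral_div]
    congr 1
    have hshift : (∫ t in (0:ℝ)..b, g (t + ε)) = ∫ t in ε..(b+ε), g t := by
      simpa [zero_add, add_comm] using intervalIntegral.integral_comp_add_right (a := (0:ℝ))
        (b := b) g ε
    have hintε : IntervalIntegrable (fun t => g (t + ε)) volume 0 b :=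
      (hcont.comp (continuous_id.add continuous_const)).intervalIntegrable _ _
    rw [intervalIntegral.integral_sub hintε (hint _ _), hshift]
    have h1 := intervalIntegral.integral_add_adjacent_intervals (hint ε b) (hint b (b+ε))
    have h2 := intervalIntegral.integral_add_adjacent_intervals (hint 0 ε) (hint ε b)
    linarith
  -- Step 2: boundary averages tendsto
  have tendA : Tendsto (fun ε => (∫ t in b..(b+ε), g t) / ε) (nhdsWithin (0:ℝ) (Ioi 0))
      (nhds (g b)) := by
    have hF : HasDerivAt (fun u => ∫ t in b..u, g t) (g b) b :=
      intervalIntegral.integral_hasDerivAt_right (hint b b)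
        hcont.stronglyMeasurable.stronglyMeasurableAtFilter hcont.continuousAt
    have := slope_tendsto_right hF
    refine this.congr fun ε => ?_
    simp [intervalIntegral.integral_same]
  have tendB : Tendsto (fun ε => (∫ t in (0:ℝ)..ε, g t) / ε) (nhdsWithin (0:ℝ) (Ioi 0))
      (nhds (g 0)) := by
    have hF : HasDerivAt (fun u => ∫ t in (0:ℝ)..u, g t) (g 0) 0 :=
      intervalIntegral.integral_hasDerivAt_right (hint 0 0)
        hcont.stronglyMeasurable.stronglyMeasurableAtFilter hcont.continuousAt
    have := slope_tendsto_right hF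
    refine this.congr fun ε => ?_
    simp [intervalIntegral.integral_same]
  have tendI : Tendsto (fun ε => ∫ t in (0:ℝ)..b, (g (t + ε) - g t) / ε)
      (nhdsWithin (0:ℝ) (Ioi 0)) (nhds (g b - g 0)) := by
    refine Tendsto.congr' ?_ (tendA.sub tendB)
    filter_upwards [self_mem_nhdsWithin] with ε hε
    exact (sub_div _ _ _).symm.trans (key ε (ne_of_gt hε)).symm
  -- Step 3: dominated convergence
  have tendD : Tendsto (fun ε => ∫ t in (0:ℝ)..b, (g (t + ε) - g t) / ε)
      (nhdsWithin (0:ℝ) (Ioi 0)) (nhds (∫ t, deriv g t ∂μ)) := by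
    have heq : ∀ ε : ℝ, (∫ t in (0:ℝ)..b, (g (t + ε) - g t) / ε)
        = ∫ t, (g (t + ε) - g t) / ε ∂μ := fun ε =>
      intervalIntegral.integral_of_le hb.le
    simp only [heq]
    haveI : IsFiniteMeasure μ := ⟨hμfin⟩
    apply MeasureTheory.tendsto_integral_filter_of_dominated_convergence (fun _ => (K:ℝ))
    · filter_upwards with ε
      exact (((hcont.comp (continuous_id.add continuous_const)).sub hcont).div_const
        ε).aestronglyMeasurable
    · filter_upwards [self_mem_nhdsWithin] with ε hε
      filter_upwards with t
      have hε' : (0:ℝ) < ε := hε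
      have := hg.dist_le_mul (t + ε) t
      rw [Real.dist_eq, Real.dist_eq] at this
      simp only [add_sub_cancel_left] at this
      rw [Real.norm_eq_abs, abs_div, abs_of_pos hε', div_le_iff₀ hε']
      simpa [abs_of_pos hε'] using this
    · exact integrable_const _
    · filter_upwards [hdμ] with t ⟨h1, h2⟩
      exact slope_tendsto_right h1.hasDerivAt
  -- combine
  have huniq : g b - g 0 = ∫ t, deriv g t ∂μ := tendsto_nhds_unique tendI tendD
  rw [huniq]
  have hintd : Integrable (deriv g) μ := by
    refine (integrable_const (K:ℝ)).mono' ((measurable_deriv g).aestronglyMeasurable) ?_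
    filter_upwards with t
    simpa [Real.norm_eq_abs] using abs_deriv_le_of_lipschitz hg t
  calc ∫ t, deriv g t ∂μ ≤ ∫ _t, c ∂μ := by
        apply integral_mono_ae hintd (integrable_const c)
        filter_upwards [hdμ] with t ht using ht.2
    _ = c * b := by
        rw [integral_const]
        simp [hμ, Real.volume_Ioc, ENNReal.toReal_ofReal hb.le]
        rw [max_eq_left hb.le]; ring

lemma segment_bound {n : ℕ} {G : (Fin n → ℝ) → ℝ} {B : Set (Fin n → ℝ)} (hB : IsOpen B)
    {K : NNReal} (hL : LipschitzOnWith K G B) {S' : Set (Fin n → ℝ)} {v : Fin n → ℝ} {c : ℝ}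
    (hgrad : ∀ w ∈ B \ S', DifferentiableAt ℝ G w ∧ fderiv ℝ G w v ≤ c)
    {z : Fin n → ℝ} {h : ℝ} (hh : 0 ≤ h)
    (hseg : ∀ t ∈ Set.Icc (0:ℝ) h, z + t • v ∈ B)
    (hline : volume {t : ℝ | z + t • v ∈ S'} = 0) :
    G (z + h • v) - G z ≤ c * h := by
  set g₀ : ℝ → ℝ := fun t => G (z + t • v) with hg₀
  set I : Set ℝ := {t | z + t • v ∈ B} with hI
  have hImem : ∀ t ∈ Set.Icc (0:ℝ) h, t ∈ I := hseg
  have hIopen : IsOpen I := by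
    have : Continuous fun t : ℝ => z + t • v := by continuity
    exact hB.preimage this
  have hlip : LipschitzOnWith (K * ‖v‖₊) g₀ I := by
    rw [lipschitzOnWith_iff_dist_le_mul]
    intro s hs t ht
    have h1 := (lipschitzOnWith_iff_dist_le_mul.1 hL) _ (hs : z + s • v ∈ B) _ ht
    refine h1.trans ?_
    have h2 : dist (z + s • v) (z + t • v) = |s - t| * ‖v‖ := by
      rw [dist_eq_norm]
      have : z + s • v - (z + t • v) = (s - t) • v := by
        rw [sub_smul]; abel
      rw [this, norm_smul, Real.norm_eq_abs]
    rw [h2, Real.dist_eq]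
    push_cast
    nlinarith [abs_nonneg (s - t), norm_nonneg v, K.coe_nonneg]
  obtain ⟨g1, hg1L, hEq⟩ := hlip.extend_real
  have h0I : (0:ℝ) ∈ I := hImem 0 ⟨le_refl _, hh⟩
  have hhI : h ∈ I := hImem h ⟨hh, le_refl _⟩
  have key := lipschitz_sub_le_of_ae_deriv_le hg1L hh (c := c) ?_
  · rw [← hEq h0I, ← hEq hhI] at key
    simpa [hg₀] using key
  · have hae : ∀ᵐ t : ℝ, z + t • v ∉ S' := by
      rw [ae_iff]
      simpa using hline
    filter_upwards [hae] with t ht htmem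
    have hw : z + t • v ∈ B \ S' := ⟨hseg t ⟨htmem.1.le, htmem.2.le⟩, ht⟩
    obtain ⟨hdiff, hle⟩ := hgrad _ hw
    have haff : HasDerivAt (fun s : ℝ => z + s • v) v t := by
      simpa using ((hasDerivAt_id t).smul_const v).const_add z
    have hder : HasDerivAt g₀ (fderiv ℝ G (z + t • v) v) t :=
      hdiff.hasFDerivAt.comp_hasDerivAt t haff
    have htI : t ∈ I := hseg t ⟨htmem.1.le, htmem.2.le⟩
    have hev : g₀ =ᶠ[nhds t] g1 := by
      filter_upwards [hIopen.mem_nhds htI] with s hs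
      exact hEq hs
    have hder' : HasDerivAt g1 (fderiv ℝ G (z + t • v) v) t :=
      hder.congr_of_eventuallyEq hev.symm
    exact ⟨hder'.differentiableAt, hder'.deriv ▸ hle⟩

-- Fubini lemma
lemma fubini_line {n : ℕ} {S' : Set (Fin n → ℝ)} (hm : MeasurableSet S') (h0 : volume S' = 0)
    (v : Fin n → ℝ) :
    ∀ᵐ z : Fin n → ℝ, volume {t : ℝ | z + t • v ∈ S'} = 0 := by
  have hmap : Measurable fun p : ℝ × (Fin n → ℝ) => p.2 + p.1 • v := by
    apply Measurable.add measurable_snd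
    exact (measurable_fst.smul measurable_const)
  set A' : Set (ℝ × (Fin n → ℝ)) := (fun p : ℝ × (Fin n → ℝ) => p.2 + p.1 • v) ⁻¹' S' with hA'def
  have hA' : MeasurableSet A' := hmap hm
  have hA'0 : ((volume : Measure ℝ).prod (volume : Measure (Fin n → ℝ))) A' = 0 := by
    rw [Measure.measure_prod_null hA']
    refine ae_of_all _ fun t => ?_
    show volume ((fun z : Fin n → ℝ => z + t • v) ⁻¹' S') = 0
    rw [measure_preimage_add_right]
    exact h0
  set A : Set ((Fin n → ℝ) × ℝ) := (fun p : (Fin n → ℝ) × ℝ => p.1 + p.2 • v) ⁻¹' S' with hAdef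
  have hAm : MeasurableSet A := by
    apply (Measurable.add measurable_fst (measurable_snd.smul measurable_const)) hm
  have hA0 : ((volume : Measure (Fin n → ℝ)).prod (volume : Measure ℝ)) A = 0 := by
    have hswap : A = Prod.swap ⁻¹' A' := rfl
    rw [hswap, ← Measure.map_apply measurable_swap hA']
    rw [Measure.prod_swap]
    exact hA'0
  have := (Measure.measure_prod_null hAm).1 hA0
  filter_upwards [this] with z hz
  exact hz

lemma dense_conull {n : ℕ} {Z : Set (Fin n → ℝ)} (h : volume Zᶜ = 0) : Dense Z := by
  rw [dense_iff_inter_open]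
  intro U hU hne
  by_contra hempty
  rw [not_nonempty_iff_eq_empty] at hempty
  have hsub : U ⊆ Zᶜ := fun u hu => fun huZ =>
    (eq_empty_iff_forall_notMem.1 hempty u) ⟨hu, huZ⟩
  exact absurd (measure_mono_null hsub h) (hU.measure_pos volume hne).ne'

/-- for a locally Lipschitz `G : ℝⁿ → ℝ`, differentiable off a
measure-zero set `S`, the Clarke generalized directional derivative
`G°(x;v) = limsup_{z→x, h→0⁺} (G(z+hv) − G(z))/h` equals
`limsup_{z→x, z∉S} ∇G(z)·v`. -/
theorem clarke_derivative_eq_limsup_gradient (n : ℕ)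
    (G : (Fin n → ℝ) → ℝ) (hG : LocallyLipschitz G)
    (S : Set (Fin n → ℝ)) (hS : volume S = 0)
    (hGd : ∀ z ∉ S, DifferentiableAt ℝ G z)
    (x v : Fin n → ℝ) :
    Filter.limsup
        (fun p : (Fin n → ℝ) × ℝ => (G (p.1 + p.2 • v) - G p.1) / p.2)
        ((nhds x) ×ˢ (nhdsWithin 0 (Ioi 0)))
      = Filter.limsup (fun z => fderiv ℝ G z v) (nhdsWithin x Sᶜ) := by
  classical
  obtain ⟨K, U, hU, hLipU⟩ := hG x
  obtain ⟨r, hrpos, hball⟩ := Metric.mem_nhds_iff.1 hU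
  have hLipB : LipschitzOnWith K G (Metric.ball x r) := hLipU.mono hball
  set M : ℝ := K * ‖v‖ with hM
  -- NeBot of the gradient filter
  have hSdense : Dense Sᶜ := dense_conull (by rw [compl_compl]; exact hS)
  haveI hNB₂ : (nhdsWithin x Sᶜ).NeBot := mem_closure_iff_nhdsWithin_neBot.1 (hSdense x)
  -- segment inclusion helper
  have hsegball : ∀ ρ : ℝ, 0 < ρ → ρ ≤ r → ∀ z ∈ Metric.ball x (ρ/2),
      ∀ h : ℝ, 0 ≤ h → h < ρ/(2*(‖v‖+1)) → ∀ t ∈ Set.Icc (0:ℝ) h,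
      z + t • v ∈ Metric.ball x ρ := by
    intro ρ hρpos hρr z hz h hh hhε t ht
    rw [Metric.mem_ball] at hz ⊢
    have h1 : dist (z + t • v) z = t * ‖v‖ := by
      rw [dist_eq_norm, add_sub_cancel_left, norm_smul, Real.norm_eq_abs,
        abs_of_nonneg ht.1]
    have hv1 : (0:ℝ) < ‖v‖ + 1 := by positivity
    have h2 : t * ‖v‖ < ρ/2 := by
      have : t * ‖v‖ ≤ h * (‖v‖ + 1) := by
        apply mul_le_mul ht.2 (by linarith [norm_nonneg v]) (norm_nonneg v) hh
      have h3 : h * (‖v‖ + 1) < ρ/2 := by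
        rw [div_mul_eq_div_div] at hhε
        calc h * (‖v‖ + 1) < (ρ/2/(‖v‖+1)) * (‖v‖+1) := by
              apply mul_lt_mul_of_pos_right hhε hv1
          _ = ρ/2 := by field_simp
      linarith
    calc dist (z + t • v) x ≤ dist (z + t • v) z + dist z x := dist_triangle _ _ _
      _ < ρ/2 + ρ/2 := by rw [h1]; exact add_lt_add_of_lt_of_lt h2 hz
      _ = ρ := by ring
  -- pointwise quotient bound
  have hptw : ∀ z ∈ Metric.ball x (r/2), ∀ h : ℝ, 0 < h → h < r/(2*(‖v‖+1)) →
      |(G (z + h • v) - G z) / h| ≤ M := by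
    intro z hz h hh hhε
    have hzB : z ∈ Metric.ball x r := by
      rw [Metric.mem_ball] at hz ⊢; linarith
    have hzB' : z + h • v ∈ Metric.ball x r :=
      hsegball r hrpos le_rfl z hz h hh.le hhε h ⟨hh.le, le_rfl⟩
    have hd := (lipschitzOnWith_iff_dist_le_mul.1 hLipB) _ hzB' _ hzB
    have hdist : dist (z + h • v) z = h * ‖v‖ := by
      rw [dist_eq_norm, add_sub_cancel_left, norm_smul, Real.norm_eq_abs, abs_of_pos hh]
    rw [Real.dist_eq, hdist] at hd
    rw [abs_div, abs_of_pos hh, div_le_iff₀ hh, hM]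
    calc |G (z + h • v) - G z| ≤ K * (h * ‖v‖) := hd
      _ = K * ‖v‖ * h := by ring
  -- derivative as one-sided limit of quotients
  have hder : ∀ z ∉ S, Tendsto (fun h : ℝ => (G (z + h • v) - G z) / h)
      (nhdsWithin (0:ℝ) (Ioi 0)) (nhds (fderiv ℝ G z v)) := by
    intro z hz
    have haff : HasDerivAt (fun s : ℝ => z + s • v) v 0 := by
      simpa using ((hasDerivAt_id (0:ℝ)).smul_const v).const_add z
    have h0 : z + (0:ℝ) • v = z := by simp
    have hdz : HasFDerivAt G (fderiv ℝ G z) (z + (0:ℝ) • v) := by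
      rw [h0]; exact (hGd z hz).hasFDerivAt
    have hcomp : HasDerivAt (fun s : ℝ => G (z + s • v)) (fderiv ℝ G z v) 0 :=
      hdz.comp_hasDerivAt 0 haff
    have := slope_tendsto_right hcomp
    refine this.congr fun ε => ?_
    simp [h0]
  -- eventual bounds
  have hε₀pos : 0 < r/(2*(‖v‖+1)) := by positivity
  have hbound₁ : ∀ᶠ p in (nhds x) ×ˢ (nhdsWithin (0:ℝ) (Ioi 0)),
      |(G (p.1 + p.2 • v) - G p.1) / p.2| ≤ M := by
    have hmem : (Metric.ball x (r/2)) ×ˢ (Set.Ioo (0:ℝ) (r/(2*(‖v‖+1))))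
        ∈ (nhds x) ×ˢ (nhdsWithin (0:ℝ) (Ioi 0)) :=
      prod_mem_prod (Metric.ball_mem_nhds x (by positivity))
        (Ioo_mem_nhdsGT_of_mem ⟨le_refl _, hε₀pos⟩)
    filter_upwards [hmem] with p hp
    exact hptw p.1 hp.1 p.2 hp.2.1 hp.2.2
  have hbound₂ : ∀ᶠ z in nhdsWithin x Sᶜ, |fderiv ℝ G z v| ≤ M := by
    have hmem : Metric.ball x (r/2) ∈ nhds x := Metric.ball_mem_nhds x (by positivity)
    filter_upwards [mem_nhdsWithin_of_mem_nhds hmem, self_mem_nhdsWithin] with z hz hzS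
    have htend := (hder z hzS).abs
    refine le_of_tendsto htend ?_
    filter_upwards [Ioo_mem_nhdsGT_of_mem (Set.left_mem_Ico.2 hε₀pos)] with h hh
    exact hptw z hz h hh.1 hh.2
  have hbdd₁above : IsBoundedUnder (· ≤ ·) ((nhds x) ×ˢ (nhdsWithin (0:ℝ) (Ioi 0)))
      (fun p : (Fin n → ℝ) × ℝ => (G (p.1 + p.2 • v) - G p.1) / p.2) :=
    ⟨M, eventually_map.2 (hbound₁.mono fun p hp => (abs_le.1 hp).2)⟩
  have hbdd₁below : IsBoundedUnder (· ≥ ·) ((nhds x) ×ˢ (nhdsWithin (0:ℝ) (Ioi 0)))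
      (fun p : (Fin n → ℝ) × ℝ => (G (p.1 + p.2 • v) - G p.1) / p.2) :=
    ⟨-M, eventually_map.2 (hbound₁.mono fun p hp => (abs_le.1 hp).1)⟩
  have hbdd₂above : IsBoundedUnder (· ≤ ·) (nhdsWithin x Sᶜ) (fun z => fderiv ℝ G z v) :=
    ⟨M, eventually_map.2 (hbound₂.mono fun z hz => (abs_le.1 hz).2)⟩
  have hbdd₂below : IsBoundedUnder (· ≥ ·) (nhdsWithin x Sᶜ) (fun z => fderiv ℝ G z v) :=
    ⟨-M, eventually_map.2 (hbound₂.mono fun z hz => (abs_le.1 hz).1)⟩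
  have hcb₁ : IsCoboundedUnder (· ≤ ·) ((nhds x) ×ˢ (nhdsWithin (0:ℝ) (Ioi 0)))
      (fun p : (Fin n → ℝ) × ℝ => (G (p.1 + p.2 • v) - G p.1) / p.2) :=
    hbdd₁below.isCoboundedUnder_le
  have hcb₂ : IsCoboundedUnder (· ≤ ·) (nhdsWithin x Sᶜ) (fun z => fderiv ℝ G z v) :=
    hbdd₂below.isCoboundedUnder_le
  apply le_antisymm
  · -- Clarke ≤ limsup of gradients
    refine le_of_forall_gt_imp_ge_of_dense fun c hc => ?_
    have hev : ∀ᶠ z in nhdsWithin x Sᶜ, fderiv ℝ G z v < c :=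
      eventually_lt_of_limsup_lt hc hbdd₂above
    rw [eventually_nhdsWithin_iff] at hev
    obtain ⟨ρ₀, hρ₀pos, hρ₀⟩ := Metric.eventually_nhds_iff_ball.1 hev
    set ρ := min ρ₀ r with hρdef
    have hρpos : 0 < ρ := lt_min hρ₀pos hrpos
    have hρr : ρ ≤ r := min_le_right _ _
    have hgrad : ∀ w ∈ Metric.ball x ρ \ S, DifferentiableAt ℝ G w ∧ fderiv ℝ G w v ≤ c := by
      intro w hw
      refine ⟨hGd w hw.2, ?_⟩
      exact (hρ₀ w (Metric.ball_subset_ball (min_le_left _ _) hw.1) hw.2).le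
    obtain ⟨S', hS'sub, hS'm, hS'0⟩ := exists_measurable_superset_of_null hS
    have hZae := fubini_line hS'm hS'0 v
    set Z : Set (Fin n → ℝ) := {z | volume {t : ℝ | z + t • v ∈ S'} = 0} with hZdef
    have hZdense : Dense Z := by
      apply dense_conull
      rw [hZdef, compl_setOf]
      exact ae_iff.1 hZae
    have hε₁pos : 0 < ρ/(2*(‖v‖+1)) := by positivity
    apply limsup_le_of_le hcb₁
    have hmem : (Metric.ball x (ρ/2)) ×ˢ (Set.Ioo (0:ℝ) (ρ/(2*(‖v‖+1))))
        ∈ (nhds x) ×ˢ (nhdsWithin (0:ℝ) (Ioi 0)) :=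
      prod_mem_prod (Metric.ball_mem_nhds x (by positivity))
        (Ioo_mem_nhdsGT_of_mem ⟨le_refl _, hε₁pos⟩)
    filter_upwards [hmem] with p hp
    obtain ⟨hp1, hp2⟩ := hp
    have hgrad' : ∀ w ∈ Metric.ball x ρ \ S', DifferentiableAt ℝ G w ∧ fderiv ℝ G w v ≤ c :=
      fun w hw => hgrad w ⟨hw.1, fun hwS => hw.2 (hS'sub hwS)⟩
    have hsub : G (p.1 + p.2 • v) - G p.1 ≤ c * p.2 := by
      have hW : ∀ z ∈ Z ∩ Metric.ball x (ρ/2), G (z + p.2 • v) - G z ≤ c * p.2 := by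
        intro z hz
        exact segment_bound Metric.isOpen_ball
          (hLipB.mono (Metric.ball_subset_ball hρr)) hgrad' hp2.1.le
          (hsegball ρ hρpos hρr z hz.2 p.2 hp2.1.le hp2.2) hz.1
      have hclosed : IsClosed {z : Fin n → ℝ | G (z + p.2 • v) - G z ≤ c * p.2} := by
        apply isClosed_le _ continuous_const
        exact (hG.continuous.comp (continuous_id.add continuous_const)).sub hG.continuous
      have hsub2 : Metric.ball x (ρ/2) ⊆ closure (Metric.ball x (ρ/2) ∩ Z) :=
        hZdense.open_subset_closure_inter Metric.isOpen_ball
      have hsub3 : Metric.ball x (ρ/2) ∩ Z ⊆ {z : Fin n → ℝ | G (z + p.2 • v) - G z ≤ c * p.2} :=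
        fun z hz => hW z ⟨hz.2, hz.1⟩
      have := hsub2.trans (closure_mono hsub3)
      have h4 := this hp1
      rwa [hclosed.closure_eq] at h4
    rw [div_le_iff₀ hp2.1]
    linarith [hsub]
  · -- limsup of gradients ≤ Clarke
    refine le_of_forall_gt_imp_ge_of_dense fun c hc => ?_
    have hev : ∀ᶠ p in (nhds x) ×ˢ (nhdsWithin (0:ℝ) (Ioi 0)),
        (G (p.1 + p.2 • v) - G p.1) / p.2 < c :=
      eventually_lt_of_limsup_lt hc hbdd₁above
    rw [eventually_prod_iff] at hev
    obtain ⟨P, hP, Q, hQ, hPQ⟩ := hev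
    apply limsup_le_of_le hcb₂
    filter_upwards [hP.filter_mono nhdsWithin_le_nhds, self_mem_nhdsWithin] with z hz hzS
    refine le_of_tendsto (hder z hzS) ?_
    filter_upwards [hQ] with h hQh
    exact (hPQ hz hQh).le
end

section
/- Luenberger observer convergence: if μ(∂f/∂x(t,x) + L ∂g/∂x(t,x)) ≤ c for all x ∈ 𝒳 and t ≥ 0, then for any solution (x(t), x̂(t)) of the system ẋ = f(t,x), y = g(t,x) interconnected with the observer x̂̇ = f(t,x̂) + L(g(t,x̂) − g(t,x)), one has |x(t) − x̂(t)| ≤ e^{ct} |x(0) − x̂(0)| for all t ≥ 0. In particular, c < 0 implies global exponential stability of the zero-error set {x = x̂}. -/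
open Filter Set Topology

variable {n : ℕ} {N : (Fin n → ℝ) → ℝ}

theorem IsNorm.zero (hN : IsNorm N) : N 0 = 0 := (hN.1 0).2 rfl

theorem IsNorm.nonneg_s11 (hN : IsNorm N) (x : Fin n → ℝ) : 0 ≤ N x := by
  have h2 := hN.2.1 (-1) x
  have h3 := hN.2.2 x ((-1 : ℝ) • x)
  have h4 : x + (-1 : ℝ) • x = 0 := by simp
  rw [h4, hN.zero, h2] at h3
  simp at h3
  linarith

theorem IsNorm.sum_le (hN : IsNorm N) {ι : Type*} (s : Finset ι) (v : ι → Fin n → ℝ) :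
    N (∑ i ∈ s, v i) ≤ ∑ i ∈ s, N (v i) := by
  classical
  induction s using Finset.induction with
  | empty => simp [hN.zero]
  | insert _ _ hi ih =>
    rw [Finset.sum_insert hi, Finset.sum_insert hi]
    exact le_trans (hN.2.2 _ _) (by linarith)

theorem IsNorm.lipschitzBound (hN : IsNorm N) :
    ∃ b : ℝ, 0 < b ∧ ∀ x, N x ≤ b * ‖x‖ := by
  refine ⟨(∑ i, N (Pi.single i (1 : ℝ))) + 1, ?_, fun x => ?_⟩
  · have : 0 ≤ ∑ i, N (Pi.single i (1 : ℝ)) :=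
      Finset.sum_nonneg fun i _ => hN.nonneg_s11 _
    linarith
  have hx : x = ∑ i, x i • (Pi.single i (1 : ℝ) : Fin n → ℝ) := by
    ext j
    rw [Finset.sum_apply]
    simp [Pi.single_apply, eq_comm]
  calc N x ≤ ∑ i, N (x i • (Pi.single i (1 : ℝ) : Fin n → ℝ)) := by
        nth_rewrite 1 [hx]; exact hN.sum_le _ _
    _ ≤ ∑ i, ‖x‖ * N (Pi.single i (1 : ℝ)) := by
        refine Finset.sum_le_sum fun i _ => ?_
        rw [hN.2.1]
        exact mul_le_mul_of_nonneg_right (by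
          rw [← Real.norm_eq_abs]; exact norm_le_pi_norm x i) (hN.nonneg_s11 _)
    _ = (∑ i, N (Pi.single i (1 : ℝ))) * ‖x‖ := by
        rw [Finset.sum_mul]; exact Finset.sum_congr rfl fun i _ => mul_comm _ _
    _ ≤ _ := by nlinarith [norm_nonneg x]

theorem IsNorm.continuous_s11 (hN : IsNorm N) : Continuous N := by
  obtain ⟨b, hb, hNb⟩ := hN.lipschitzBound
  have key : ∀ x y : Fin n → ℝ, N x - N y ≤ b * ‖x - y‖ := by
    intro x y
    have h1 := hN.2.2 (x - y) y
    simp only [sub_add_cancel] at h1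
    have h2 := hNb (x - y)
    linarith
  rw [Metric.continuous_iff]
  intro x ε hε
  refine ⟨ε / b, by positivity, fun y hy => ?_⟩
  rw [Real.dist_eq]
  have h1 := key y x
  have h2 := key x y
  have h3 : ‖y - x‖ < ε / b := by rwa [← dist_eq_norm]
  have h4 : ‖x - y‖ < ε / b := by rw [norm_sub_rev]; rwa [← dist_eq_norm]
  rw [abs_lt]
  constructor <;> nlinarith [mul_lt_mul_of_pos_left h3 hb, mul_lt_mul_of_pos_left h4 hb,
    mul_div_cancel₀ ε hb.ne']

theorem IsNorm.lowerBound (hN : IsNorm N) (hn : 0 < n) :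
    ∃ a : ℝ, 0 < a ∧ ∀ x, a * ‖x‖ ≤ N x := by
  have hsc : IsCompact (Metric.sphere (0 : Fin n → ℝ) 1) := isCompact_sphere _ _
  have hsne : (Metric.sphere (0 : Fin n → ℝ) 1).Nonempty := by
    refine ⟨Pi.single ⟨0, hn⟩ 1, ?_⟩
    simp [Pi.norm_single]
  obtain ⟨x₀, hx₀s, hx₀min⟩ := hsc.exists_isMinOn hsne hN.continuous_s11.continuousOn
  have hx₀ne : x₀ ≠ 0 := by
    intro h
    rw [h] at hx₀s; simp at hx₀s
  have ha : 0 < N x₀ := by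
    rcases (hN.nonneg_s11 x₀).lt_or_eq with h | h
    · exact h
    · exact absurd ((hN.1 x₀).1 h.symm) hx₀ne
  refine ⟨N x₀, ha, fun x => ?_⟩
  rcases eq_or_ne x 0 with rfl | hx
  · simp [hN.zero]
  · have hxn : (0 : ℝ) < ‖x‖ := norm_pos_iff.2 hx
    have hu : (‖x‖⁻¹ • x) ∈ Metric.sphere (0 : Fin n → ℝ) 1 := by
      simp [norm_smul, abs_of_pos (inv_pos.2 hxn), inv_mul_cancel₀ hxn.ne']
    have hmin : N x₀ ≤ N (‖x‖⁻¹ • x) := hx₀min hu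
    have h2 := hN.2.1 ‖x‖⁻¹ x
    rw [h2, abs_of_pos (inv_pos.2 hxn)] at hmin
    calc N x₀ * ‖x‖ ≤ (‖x‖⁻¹ * N x) * ‖x‖ :=
          mul_le_mul_of_nonneg_right hmin hxn.le
      _ = N x := by field_simp

theorem IsNorm.pos_s11 (hN : IsNorm N) {x : Fin n → ℝ} (hx : x ≠ 0) : 0 < N x := by
  rcases (hN.nonneg_s11 x).lt_or_eq with h | h
  · exact h
  · exact absurd ((hN.1 x).1 h.symm) hx

theorem IsNorm.exists_unit (hN : IsNorm N) (hn : 0 < n) : ∃ x : Fin n → ℝ, N x = 1 := by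
  have hx0 : (Pi.single (⟨0, hn⟩ : Fin n) (1 : ℝ) : Fin n → ℝ) ≠ 0 := by
    intro h
    have := congrFun h ⟨0, hn⟩
    simp at this
  have hp := hN.pos_s11 hx0
  set v : Fin n → ℝ := Pi.single (⟨0, hn⟩ : Fin n) (1 : ℝ) with hv
  refine ⟨(N v)⁻¹ • v, ?_⟩
  rw [hN.2.1, abs_of_pos (inv_pos.2 hp), inv_mul_cancel₀ hp.ne']

/-- continuous linear map norm of mulVec -/
noncomputable def clmN {n : ℕ} (M : Matrix (Fin n) (Fin n) ℝ) : ℝ :=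
  ‖LinearMap.toContinuousLinearMap M.mulVecLin‖

theorem mulVec_norm_le {n : ℕ} (M : Matrix (Fin n) (Fin n) ℝ) (x : Fin n → ℝ) :
    ‖M.mulVec x‖ ≤ clmN M * ‖x‖ := by
  have := (LinearMap.toContinuousLinearMap M.mulVecLin).le_opNorm x
  simpa [clmN] using this

theorem IsNorm.image_bddAbove (hN : IsNorm N) (hn : 0 < n) (M : Matrix (Fin n) (Fin n) ℝ) :
    BddAbove ((fun x => N (M.mulVec x)) '' {x | N x = 1}) := by
  obtain ⟨b, hb, hNb⟩ := hN.lipschitzBound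
  obtain ⟨a, haa, hNa⟩ := hN.lowerBound hn
  refine ⟨b * clmN M * a⁻¹, ?_⟩
  rintro - ⟨x, hx, rfl⟩
  have hx1 : N x = 1 := hx
  have h1 : ‖x‖ ≤ a⁻¹ := by
    have := hNa x
    rw [hx1] at this
    rw [← one_div]
    rw [le_div_iff₀ haa]
    linarith
  calc N (M.mulVec x) ≤ b * ‖M.mulVec x‖ := hNb _
    _ ≤ b * (clmN M * ‖x‖) := by
        exact mul_le_mul_of_nonneg_left (mulVec_norm_le M x) hb.le
    _ ≤ b * (clmN M * a⁻¹) := by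
        have h0 : 0 ≤ clmN M := norm_nonneg _
        have := mul_le_mul_of_nonneg_left h1 h0
        nlinarith
    _ = b * clmN M * a⁻¹ := by ring

theorem IsNorm.le_opNorm' (hN : IsNorm N) (hn : 0 < n) (M : Matrix (Fin n) (Fin n) ℝ)
    {x : Fin n → ℝ} (hx : N x = 1) : N (M.mulVec x) ≤ opNorm N M :=
  le_csSup (hN.image_bddAbove hn M) ⟨x, hx, rfl⟩

theorem IsNorm.opNorm_le (hN : IsNorm N) (hn : 0 < n) {M : Matrix (Fin n) (Fin n) ℝ}
    {C : ℝ} (h : ∀ x, N x = 1 → N (M.mulVec x) ≤ C) : opNorm N M ≤ C := by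
  obtain ⟨u, hu⟩ := hN.exists_unit hn
  refine csSup_le ⟨_, ⟨u, hu, rfl⟩⟩ ?_
  rintro - ⟨x, hx, rfl⟩
  exact h x hx

theorem IsNorm.le_opNorm (hN : IsNorm N) (hn : 0 < n) (M : Matrix (Fin n) (Fin n) ℝ)
    (x : Fin n → ℝ) : N (M.mulVec x) ≤ opNorm N M * N x := by
  rcases eq_or_ne x 0 with rfl | hx
  · simp [Matrix.mulVec_zero, hN.zero]
  · have hp := hN.pos_s11 hx
    have hu : N ((N x)⁻¹ • x) = 1 := by
      rw [hN.2.1, abs_of_pos (inv_pos.2 hp), inv_mul_cancel₀ hp.ne']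
    have h1 := hN.le_opNorm' hn M hu
    rw [Matrix.mulVec_smul, hN.2.1, abs_of_pos (inv_pos.2 hp)] at h1
    calc N (M.mulVec x) = N x * ((N x)⁻¹ * N (M.mulVec x)) := by field_simp
      _ ≤ N x * opNorm N M := mul_le_mul_of_nonneg_left h1 hp.le
      _ = opNorm N M * N x := mul_comm _ _

theorem IsNorm.opNorm_nonneg (hN : IsNorm N) (hn : 0 < n) (M : Matrix (Fin n) (Fin n) ℝ) :
    0 ≤ opNorm N M := by
  obtain ⟨u, hu⟩ := hN.exists_unit hn
  exact le_trans (hN.nonneg_s11 _) (hN.le_opNorm' hn M hu)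

theorem IsNorm.opNorm_one (hN : IsNorm N) (hn : 0 < n) :
    opNorm N (1 : Matrix (Fin n) (Fin n) ℝ) = 1 := by
  refine le_antisymm (hN.opNorm_le hn fun x hx => by rw [Matrix.one_mulVec]; exact hx.le) ?_
  obtain ⟨u, hu⟩ := hN.exists_unit hn
  have := hN.le_opNorm' hn 1 hu
  rwa [Matrix.one_mulVec, hu] at this

theorem IsNorm.opNorm_add_le (hN : IsNorm N) (hn : 0 < n)
    (A B : Matrix (Fin n) (Fin n) ℝ) : opNorm N (A + B) ≤ opNorm N A + opNorm N B := by
  refine hN.opNorm_le hn fun x hx => ?_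
  rw [Matrix.add_mulVec]
  exact le_trans (hN.2.2 _ _) (add_le_add (hN.le_opNorm' hn A hx) (hN.le_opNorm' hn B hx))

theorem IsNorm.opNorm_smul_le (hN : IsNorm N) (hn : 0 < n) {c : ℝ} (hc : 0 ≤ c)
    (M : Matrix (Fin n) (Fin n) ℝ) : opNorm N (c • M) ≤ c * opNorm N M := by
  refine hN.opNorm_le hn fun x hx => ?_
  rw [Matrix.smul_mulVec, hN.2.1, abs_of_nonneg hc]
  exact mul_le_mul_of_nonneg_left (hN.le_opNorm' hn M hx) hc

theorem IsNorm.opNorm_le_clmN (hN : IsNorm N) (hn : 0 < n) :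
    ∃ b a : ℝ, 0 < b ∧ 0 < a ∧ ∀ M : Matrix (Fin n) (Fin n) ℝ,
      opNorm N M ≤ b * a⁻¹ * clmN M := by
  obtain ⟨b, hb, hNb⟩ := hN.lipschitzBound
  obtain ⟨a, haa, hNa⟩ := hN.lowerBound hn
  refine ⟨b, a, hb, haa, fun M => hN.opNorm_le hn fun x hx => ?_⟩
  have h1 : ‖x‖ ≤ a⁻¹ := by
    have := hNa x
    rw [hx] at this
    rw [← one_div, le_div_iff₀ haa]
    linarith
  calc N (M.mulVec x) ≤ b * ‖M.mulVec x‖ := hNb _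
    _ ≤ b * (clmN M * ‖x‖) := mul_le_mul_of_nonneg_left (mulVec_norm_le M x) hb.le
    _ ≤ b * (clmN M * a⁻¹) :=
        mul_le_mul_of_nonneg_left
          (mul_le_mul_of_nonneg_left h1 (norm_nonneg _)) hb.le
    _ = b * a⁻¹ * clmN M := by ring

theorem IsNorm.opNorm_slope_mono (hN : IsNorm N) (hn : 0 < n)
    (A : Matrix (Fin n) (Fin n) ℝ) {h h₀ : ℝ} (hh : 0 < h) (hh₀ : h ≤ h₀) :
    (opNorm N (1 + h • A) - 1) / h ≤ (opNorm N (1 + h₀ • A) - 1) / h₀ := by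
  have hh₀pos : 0 < h₀ := lt_of_lt_of_le hh hh₀
  have hdecomp : (1 : Matrix (Fin n) (Fin n) ℝ) + h • A
      = (h / h₀) • (1 + h₀ • A) + (1 - h / h₀) • (1 : Matrix (Fin n) (Fin n) ℝ) := by
    rw [smul_add, smul_smul]
    rw [div_mul_cancel₀ _ hh₀pos.ne']
    rw [sub_smul, one_smul]
    abel
  have h1 : opNorm N (1 + h • A) ≤ (h / h₀) * opNorm N (1 + h₀ • A) + (1 - h / h₀) := by
    rw [hdecomp]
    refine le_trans (hN.opNorm_add_le hn _ _) ?_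
    have e1 := hN.opNorm_smul_le hn (c := h / h₀) (by positivity) (1 + h₀ • A)
    have e2 := hN.opNorm_smul_le hn (c := 1 - h / h₀) (by
      rw [sub_nonneg, div_le_one hh₀pos]; exact hh₀) (1 : Matrix (Fin n) (Fin n) ℝ)
    rw [hN.opNorm_one hn, mul_one] at e2
    linarith
  rw [div_le_div_iff₀ hh hh₀pos]
  have h2 := mul_le_mul_of_nonneg_right h1 hh₀pos.le
  have h3 : (h / h₀ * opNorm N (1 + h₀ • A) + (1 - h / h₀)) * h₀
      = h * opNorm N (1 + h₀ • A) + (h₀ - h) := by field_simp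
  nlinarith [h2, h3]

/-- Mean value inequality for the norm `N` along a segment. -/
theorem IsNorm.mvt (hN : IsNorm N) (hn : 0 < n) {X : Set (Fin n → ℝ)} (hX : Convex ℝ X)
    {ψ : (Fin n → ℝ) → (Fin n → ℝ)} {B : (Fin n → ℝ) → Matrix (Fin n) (Fin n) ℝ}
    {u v : Fin n → ℝ} (hu : u ∈ X) (hv : v ∈ X)
    (hd : ∀ y ∈ X, HasFDerivWithinAt ψ ((B y).mulVecLin.toContinuousLinearMap) X y)
    {C : ℝ} (hC : ∀ y ∈ segment ℝ v u, opNorm N (B y) ≤ C) :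
    N (ψ u - ψ v) ≤ C * N (u - v) := by
  set γ : ℝ → (Fin n → ℝ) := fun s => v + s • (u - v) with hγ
  have hγmem : ∀ s ∈ Icc (0 : ℝ) 1, γ s ∈ segment ℝ v u := by
    intro s hs
    refine ⟨1 - s, s, by linarith [hs.2], hs.1, by linarith [hs.2], ?_⟩
    simp only [hγ, smul_sub, sub_smul, one_smul]
    abel
  have hγX : ∀ s ∈ Icc (0 : ℝ) 1, γ s ∈ X := fun s hs =>
    hX.segment_subset hv hu (hγmem s hs)
  have hγd : ∀ s : ℝ, HasDerivAt γ (u - v) s := by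
    intro s
    have h1 : HasDerivAt (fun s : ℝ => s • (u - v)) ((1 : ℝ) • (u - v)) s :=
      (hasDerivAt_id s).smul_const (u - v)
    show HasDerivAt (fun s => v + s • (u - v)) _ s
    simpa using h1.const_add v
  set φ : ℝ → (Fin n → ℝ) := fun s => ψ (γ s) with hφ
  have hφd : ∀ s ∈ Icc (0 : ℝ) 1,
      HasDerivWithinAt φ ((B (γ s)).mulVec (u - v)) (Icc 0 1) s := by
    intro s hs
    have hcomp := (hd (γ s) (hγX s hs)).comp_hasDerivWithinAt s
      ((hγd s).hasDerivWithinAt) (fun z hz => hγX z hz)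
    show HasDerivWithinAt (ψ ∘ γ) _ _ _
    simpa using hcomp
  set w : ℝ → ℝ := fun s => N (φ s - φ 0) with hw
  have hwc : ContinuousOn w (Icc 0 1) := by
    have hφc : ContinuousOn φ (Icc 0 1) := fun s hs =>
      (hφd s hs).continuousWithinAt
    exact hN.continuous_s11.comp_continuousOn (hφc.sub continuousOn_const)
  have key : ∀ s ∈ Icc (0 : ℝ) 1, w s ≤ gronwallBound 0 0 (C * N (u - v)) (s - 0) := by
    refine le_gronwallBound_of_liminf_deriv_right_le
      (f' := fun s => N ((B (γ s)).mulVec (u - v))) hwc ?_ (by simp [hw, hN.zero]) ?_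
    · -- liminf slope condition
      intro s hs r hr
      have hs1 : s < 1 := hs.2
      -- slope of φ tends to derivative within Ioc s 1
      have hslope : Tendsto (fun z => N (slope φ s z - (B (γ s)).mulVec (u - v)))
          (𝓝[Ioc s 1] s) (𝓝 0) := by
        have hsub : Ioc s 1 ⊆ (Icc (0:ℝ) 1) \ {s} := fun z hz =>
          ⟨⟨le_trans hs.1 hz.1.le, hz.2⟩, ne_of_gt hz.1⟩
        have h1 : Tendsto (slope φ s) (𝓝[Ioc s 1] s)
            (𝓝 ((B (γ s)).mulVec (u - v))) :=
          (hasDerivWithinAt_iff_tendsto_slope.1 (hφd s ⟨hs.1, hs.2.le⟩)).mono_left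
            (nhdsWithin_mono _ hsub)
        have h3 := h1.sub_const ((B (γ s)).mulVec (u - v))
        have h4 := (hN.continuous_s11.tendsto _).comp (by simpa using h3)
        simpa [Function.comp_def, hN.zero] using h4
      have hne : (𝓝[Ioc s 1] s).NeBot := left_nhdsWithin_Ioc_neBot hs1
      have hev : ∀ᶠ z in 𝓝[Ioc s 1] s,
          N (slope φ s z - (B (γ s)).mulVec (u - v)) < r - N ((B (γ s)).mulVec (u - v)) := by
        refine hslope.eventually_lt_const ?_
        linarith
      have hev2 : ∀ᶠ z in 𝓝[Ioc s 1] s, (z - s)⁻¹ * (w z - w s) < r := by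
        filter_upwards [hev, self_mem_nhdsWithin] with z hz hzm
        have hzs : 0 < z - s := sub_pos.2 hzm.1
        have tri : w z - w s ≤ N (φ z - φ s) := by
          have := hN.2.2 (φ s - φ 0) (φ z - φ s)
          have he : (φ s - φ 0) + (φ z - φ s) = φ z - φ 0 := by abel
          rw [he] at this
          simp only [hw]
          linarith
        have hsl : (z - s)⁻¹ * N (φ z - φ s) = N (slope φ s z) := by
          rw [slope_def_module, hN.2.1, abs_of_pos (inv_pos.2 hzs)]
        have htr2 : N (slope φ s z) ≤ N (slope φ s z - (B (γ s)).mulVec (u - v))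
            + N ((B (γ s)).mulVec (u - v)) := by
          have := hN.2.2 (slope φ s z - (B (γ s)).mulVec (u - v)) ((B (γ s)).mulVec (u - v))
          simpa using this
        have hmul : (z - s)⁻¹ * (w z - w s) ≤ (z - s)⁻¹ * N (φ z - φ s) :=
          mul_le_mul_of_nonneg_left tri (inv_pos.2 hzs).le
        rw [hsl] at hmul
        linarith
      have hle : 𝓝[Ioc s 1] s ≤ 𝓝[Ioi s] s :=
        nhdsWithin_mono _ fun z hz => hz.1
      exact (hev2.frequently).filter_mono hle
    · -- bound
      intro s hs
      have h1 := hN.le_opNorm hn (B (γ s)) (u - v)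
      have h2 := hC (γ s) (hγmem s ⟨hs.1, hs.2.le⟩)
      have h3 : opNorm N (B (γ s)) * N (u - v) ≤ C * N (u - v) :=
        mul_le_mul_of_nonneg_right h2 (hN.nonneg_s11 _)
      rw [zero_mul, zero_add]
      linarith
  have hfinal := key 1 ⟨zero_le_one, le_refl 1⟩
  rw [gronwallBound_K0] at hfinal
  have hγ1 : γ 1 = u := by simp [hγ]
  have hγ0 : γ 0 = v := by simp [hγ]
  rw [hw] at hfinal
  simp only [hφ, hγ1, hγ0] at hfinal
  linarith [hfinal]

theorem clmN_continuous {n : ℕ} : Continuous (fun M : Matrix (Fin n) (Fin n) ℝ => clmN M) := by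
  have hl : Continuous (fun M : Matrix (Fin n) (Fin n) ℝ =>
      (LinearMap.toContinuousLinearMap M.mulVecLin : (Fin n → ℝ) →L[ℝ] (Fin n → ℝ))) := by
    have : IsLinearMap ℝ (fun M : Matrix (Fin n) (Fin n) ℝ =>
        (LinearMap.toContinuousLinearMap M.mulVecLin : (Fin n → ℝ) →L[ℝ] (Fin n → ℝ))) := by
      constructor
      · intro M M'
        ext v
        simp [Matrix.add_mulVec]
      · intro c M
        ext v
        simp [Matrix.smul_mulVec]
    exact (this.mk' _).continuous_of_finiteDimensional
  exact hl.norm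

/-- opNorm is continuous along a continuous matrix-valued family. -/
theorem IsNorm.opNorm_continuousOn (hN : IsNorm N) (hn : 0 < n)
    {α : Type*} [TopologicalSpace α] {K : Set α}
    {A : α → Matrix (Fin n) (Fin n) ℝ} (hA : ContinuousOn A K) :
    ContinuousOn (fun y => opNorm N (A y)) K := by
  obtain ⟨b, a, hb, ha, hba⟩ := hN.opNorm_le_clmN hn
  intro y₀ hy₀
  have hc0 : clmN (A y₀ - A y₀) = 0 := by
    simp [clmN, Matrix.mulVecLin_zero]
  have hc : Tendsto (fun y => clmN (A y - A y₀)) (𝓝[K] y₀) (𝓝 0) := by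
    have h1 : ContinuousWithinAt (fun y => clmN (A y - A y₀)) K y₀ :=
      clmN_continuous.continuousAt.comp_continuousWithinAt
        ((hA y₀ hy₀).sub continuousWithinAt_const)
    unfold ContinuousWithinAt at h1
    simpa [clmN, Matrix.mulVecLin_zero] using h1
  have hdist : ∀ y, dist (opNorm N (A y)) (opNorm N (A y₀)) ≤ b * a⁻¹ * clmN (A y - A y₀) := by
    intro y
    have e3 : clmN (A y₀ - A y) = clmN (A y - A y₀) := by
      have hne : A y₀ - A y = -(A y - A y₀) := by abel
      have hml : (A y₀ - A y).mulVecLin = -((A y - A y₀).mulVecLin) := by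
        apply LinearMap.ext
        intro v
        simp only [Matrix.mulVecLin_apply, LinearMap.neg_apply, Matrix.sub_mulVec]
        abel
      rw [clmN, clmN, hml, map_neg, norm_neg]
    have e1 : opNorm N (A y) ≤ opNorm N (A y₀) + b * a⁻¹ * clmN (A y - A y₀) := by
      have := hN.opNorm_add_le hn (A y₀) (A y - A y₀)
      simp only [add_sub_cancel] at this
      linarith [hba (A y - A y₀)]
    have e2 : opNorm N (A y₀) ≤ opNorm N (A y) + b * a⁻¹ * clmN (A y - A y₀) := by
      have := hN.opNorm_add_le hn (A y) (A y₀ - A y)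
      simp only [add_sub_cancel] at this
      have e4 : b * a⁻¹ * clmN (A y₀ - A y) = b * a⁻¹ * clmN (A y - A y₀) := by rw [e3]
      linarith [hba (A y₀ - A y), e4]
    rw [Real.dist_eq, abs_le]
    constructor <;> linarith
  have hbd : Tendsto (fun y => b * a⁻¹ * clmN (A y - A y₀)) (𝓝[K] y₀) (𝓝 0) := by
    have := hc.const_mul (b * a⁻¹)
    simpa using this
  have : Tendsto (fun y => dist (opNorm N (A y)) (opNorm N (A y₀))) (𝓝[K] y₀) (𝓝 0) :=
    squeeze_zero (fun y => dist_nonneg) hdist hbd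
  exact (tendsto_iff_dist_tendsto_zero).2 this

/-- Uniform bound on the opNorm slope over a compact set. -/
theorem IsNorm.uniform_slope_bound (hN : IsNorm N) (hn : 0 < n)
    {K : Set (Fin n → ℝ)} (hK : IsCompact K)
    {A : (Fin n → ℝ) → Matrix (Fin n) (Fin n) ℝ} (hA : ContinuousOn A K)
    {c : ℝ} (hμ : ∀ y ∈ K, ∃ m : ℝ, HasMatrixMeasure N (A y) m ∧ m ≤ c)
    {ε : ℝ} (hε : 0 < ε) :
    ∃ h₀ : ℝ, 0 < h₀ ∧ ∀ y ∈ K, ∀ h : ℝ, 0 < h → h ≤ h₀ →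
      (opNorm N (1 + h • A y) - 1) / h < c + ε := by
  -- for each y pick h_y
  have step1 : ∀ y ∈ K, ∃ hy : ℝ, 0 < hy ∧
      (opNorm N (1 + hy • A y) - 1) / hy < c + ε / 2 := by
    intro y hy
    obtain ⟨m, hm, hmc⟩ := hμ y hy
    have := hm.eventually_lt_const (show m < c + ε / 2 by linarith)
    obtain ⟨h', hh'⟩ := (this.and self_mem_nhdsWithin).exists
    exact ⟨h', hh'.2, hh'.1⟩
  choose! hy hypos hybound using step1
  -- neighborhoods
  have step2 : ∀ y ∈ K, ∃ U : Set (Fin n → ℝ), IsOpen U ∧ y ∈ U ∧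
      ∀ z ∈ U ∩ K, (opNorm N (1 + hy y • A z) - 1) / (hy y) < c + ε := by
    intro y hyK
    have hcont : ContinuousOn (fun z => (opNorm N (1 + hy y • A z) - 1) / (hy y)) K := by
      have h1 : ContinuousOn (fun z => (1 : Matrix (Fin n) (Fin n) ℝ) + hy y • A z) K :=
        continuousOn_const.add (show ContinuousOn (fun z => hy y • A z) K from hA.const_smul (hy y))
      exact ((hN.opNorm_continuousOn hn h1).sub continuousOn_const).div_const _
    have hval : (opNorm N (1 + hy y • A y) - 1) / (hy y) < c + ε := by
      have := hybound y hyK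
      linarith
    have hmem := hcont y hyK (Iio_mem_nhds hval)
    rw [mem_map, mem_nhdsWithin] at hmem
    obtain ⟨U, hUo, hyU, hUsub⟩ := hmem
    refine ⟨U, hUo, hyU, fun z hz => ?_⟩
    have := hUsub hz
    simpa using this
  choose! U hUo hyU hUprop using step2
  obtain ⟨t, ht⟩ := hK.elim_nhds_subcover' (fun y hyK => U y)
    (fun y hyK => (hUo y hyK).mem_nhds (hyU y hyK))
  rcases t.eq_empty_or_nonempty with rfl | htne
  · refine ⟨1, one_pos, fun y hyK => ?_⟩
    simp only [Finset.notMem_empty, iUnion_of_empty, iUnion_empty] at ht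
    exact absurd (ht hyK) (notMem_empty y)
  · refine ⟨t.inf' htne (fun y => hy y.1), ?_, ?_⟩
    · rw [Finset.lt_inf'_iff]
      exact fun y _ => hypos y.1 y.2
    · intro y hyK h hh hhle
      have hmem := ht hyK
      simp only [mem_iUnion] at hmem
      obtain ⟨z, hzt, hyUz⟩ := hmem
      have hbound := hUprop z.1 z.2 y ⟨hyUz, hyK⟩
      have hle : h ≤ hy z.1 := le_trans hhle (Finset.inf'_le _ hzt)
      exact lt_of_le_of_lt (hN.opNorm_slope_mono hn (A y) hh hle) hbound

/-- Luenberger observer convergence: if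
`μ(∂f/∂x(t,x) + L ∂g/∂x(t,x)) ≤ c` for all `x ∈ 𝒳` and `t ≥ 0`, then along any
solution of the system `ẋ = f(t,x)`, `y = g(t,x)` interconnected with the
observer `x̂̇ = f(t,x̂) + L(g(t,x̂) − g(t,x))` (with both trajectories in `𝒳`),
one has `|x(t) − x̂(t)| ≤ e^{ct} |x(0) − x̂(0)|` for all `t ≥ 0`; in particular
`c < 0` gives global exponential stability of the zero-error set. -/
theorem luenberger_observer_convergence (n mdim : ℕ) (hn : 0 < n)
    (N : (Fin n → ℝ) → ℝ) (hN : IsNorm N)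
    (X : Set (Fin n → ℝ)) (hX : Convex ℝ X)
    (f : ℝ → (Fin n → ℝ) → (Fin n → ℝ))
    (g : ℝ → (Fin n → ℝ) → (Fin mdim → ℝ))
    (Jf : ℝ → (Fin n → ℝ) → Matrix (Fin n) (Fin n) ℝ)
    (Jg : ℝ → (Fin n → ℝ) → Matrix (Fin mdim) (Fin n) ℝ)
    (L : Matrix (Fin n) (Fin mdim) ℝ)
    (hfc : ContinuousOn (fun p : ℝ × (Fin n → ℝ) => f p.1 p.2) (Ici 0 ×ˢ X))
    (hgc : ContinuousOn (fun p : ℝ × (Fin n → ℝ) => g p.1 p.2) (Ici 0 ×ˢ X))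
    (hJfc : ContinuousOn (fun p : ℝ × (Fin n → ℝ) => Jf p.1 p.2) (Ici 0 ×ˢ X))
    (hJgc : ContinuousOn (fun p : ℝ × (Fin n → ℝ) => Jg p.1 p.2) (Ici 0 ×ˢ X))
    (hfd : ∀ t, 0 ≤ t → ∀ x ∈ X,
      HasFDerivWithinAt (f t) ((Jf t x).mulVecLin.toContinuousLinearMap) X x)
    (hgd : ∀ t, 0 ≤ t → ∀ x ∈ X,
      HasFDerivWithinAt (g t) ((Jg t x).mulVecLin.toContinuousLinearMap) X x)
    (c : ℝ)
    (hμ : ∀ t, 0 ≤ t → ∀ x ∈ X,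
      ∃ m : ℝ, HasMatrixMeasure N (Jf t x + L * Jg t x) m ∧ m ≤ c)
    (x xhat : ℝ → (Fin n → ℝ))
    (hx : ∀ t, 0 ≤ t → HasDerivAt x (f t (x t)) t ∧ x t ∈ X)
    (hxhat : ∀ t, 0 ≤ t →
      HasDerivAt xhat (f t (xhat t) + L.mulVec (g t (xhat t) - g t (x t))) t ∧
        xhat t ∈ X) :
    ∀ t, 0 ≤ t → N (x t - xhat t) ≤ Real.exp (c * t) * N (x 0 - xhat 0) := by
  intro T hT
  set φ : ℝ → ℝ := fun s => N (x s - xhat s) with hφdef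
  set Fc : ℝ → (Fin n → ℝ) → (Fin n → ℝ) := fun t y => f t y + L.mulVec (g t y) with hFcdef
  set A : ℝ → (Fin n → ℝ) → Matrix (Fin n) (Fin n) ℝ :=
    fun t y => Jf t y + L * Jg t y with hAdef
  -- derivative of the combined vector field
  have hFd : ∀ t, 0 ≤ t → ∀ y ∈ X, HasFDerivWithinAt (Fc t)
      (LinearMap.toContinuousLinearMap (A t y).mulVecLin) X y := by
    intro t ht y hy
    have hL : HasFDerivWithinAt (fun z => L.mulVec (g t z))
        ((LinearMap.toContinuousLinearMap L.mulVecLin).comp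
          (LinearMap.toContinuousLinearMap (Jg t y).mulVecLin)) X y := by
      have := (LinearMap.toContinuousLinearMap L.mulVecLin).hasFDerivAt.comp_hasFDerivWithinAt
        y (hgd t ht y hy)
      exact this
    have hsum := (hfd t ht y hy).add hL
    have heq : (LinearMap.toContinuousLinearMap (A t y).mulVecLin)
        = LinearMap.toContinuousLinearMap (Jf t y).mulVecLin +
          (LinearMap.toContinuousLinearMap L.mulVecLin).comp
            (LinearMap.toContinuousLinearMap (Jg t y).mulVecLin) := by
      ext v
      simp [hAdef, Matrix.add_mulVec, Matrix.mulVec_mulVec]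
    rw [heq]
    exact hsum
  have hψd : ∀ t, 0 ≤ t → ∀ h : ℝ, ∀ y ∈ X,
      HasFDerivWithinAt (fun z => z + h • Fc t z)
        (LinearMap.toContinuousLinearMap ((1 + h • A t y)).mulVecLin) X y := by
    intro t ht h y hy
    have h1 := (hasFDerivWithinAt_id y X).add ((hFd t ht y hy).const_smul h)
    have heq : (LinearMap.toContinuousLinearMap ((1 + h • A t y)).mulVecLin)
        = ContinuousLinearMap.id ℝ (Fin n → ℝ) +
          h • LinearMap.toContinuousLinearMap (A t y).mulVecLin := by
      ext v
      simp [Matrix.add_mulVec, Matrix.one_mulVec, Matrix.smul_mulVec]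
    rw [heq]
    exact h1
  have hAc : ∀ t, 0 ≤ t → ContinuousOn (A t) X := by
    intro t ht
    have hmap : ∀ y ∈ X, (t, y) ∈ (Ici (0:ℝ)) ×ˢ X := fun y hy => ⟨ht, hy⟩
    have h1 : ContinuousOn (fun y => Jf t y) X :=
      hJfc.comp (Continuous.continuousOn (continuous_const.prodMk continuous_id)) hmap
    have h2 : ContinuousOn (fun y => Jg t y) X :=
      hJgc.comp (Continuous.continuousOn (continuous_const.prodMk continuous_id)) hmap
    have h3 : Continuous (fun M : Matrix (Fin mdim) (Fin n) ℝ => L * M) :=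
      continuous_const.matrix_mul continuous_id
    exact h1.add (h3.comp_continuousOn h2)
  have hφcont : ContinuousOn φ (Icc 0 T) := by
    intro s hs
    have h1 := (hx s hs.1).1.continuousAt.sub (hxhat s hs.1).1.continuousAt
    exact (hN.continuous_s11.continuousAt.comp h1).continuousWithinAt
  have main : ∀ ε : ℝ, 0 < ε → φ T ≤ φ 0 * Real.exp ((c + ε) * T) := by
    intro ε hε
    have hdini : ∀ t ∈ Ico 0 T, ∀ r, (c + ε) * φ t < r →
        ∃ᶠ z in nhdsWithin t (Ioi t), (z - t)⁻¹ * (φ z - φ t) < r := by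
      intro t htm r hr
      have ht0 : (0:ℝ) ≤ t := htm.1
      have hKX : segment ℝ (xhat t) (x t) ⊆ X :=
        hX.segment_subset (hxhat t ht0).2 (hx t ht0).2
      have hKc : IsCompact (segment ℝ (xhat t) (x t)) := by
        rw [segment_eq_image']
        exact isCompact_Icc.image (continuous_const.add (continuous_id.smul continuous_const))
      obtain ⟨h₀, hh₀, hbound2⟩ := hN.uniform_slope_bound hn hKc ((hAc t ht0).mono hKX)
        (fun y hy => hμ t ht0 y (hKX hy)) hε
      set d := Fc t (x t) - Fc t (xhat t) with hd
      have he : HasDerivAt (fun s => x s - xhat s) d t := by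
        have h1 := (hx t ht0).1.sub (hxhat t ht0).1
        have heq : f t (x t) - (f t (xhat t) + L.mulVec (g t (xhat t) - g t (x t))) = d := by
          rw [hd, hFcdef]
          simp only [Matrix.mulVec_sub]
          abel
        rwa [heq] at h1
      have hslope : Tendsto (fun z => N (slope (fun s => x s - xhat s) t z - d))
          (nhdsWithin t (Ioi t)) (nhds 0) := by
        have h1 := hasDerivAt_iff_tendsto_slope.1 he
        have h2 : (nhdsWithin t (Ioi t)) ≤ (nhdsWithin t {t}ᶜ) :=
          nhdsWithin_mono _ fun z hz => mem_compl_singleton_iff.mpr (ne_of_gt hz)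
        have h3 := (h1.mono_left h2).sub_const d
        have h4 := (hN.continuous_s11.tendsto _).comp h3
        simpa [Function.comp_def, hN.zero] using h4
      have hev1 := hslope.eventually_lt_const
        (show (0:ℝ) < r - (c + ε) * φ t by linarith)
      have hev2 : ∀ᶠ z in nhdsWithin t (Ioi t), z ∈ Ioo t (t + h₀) :=
        Ioo_mem_nhdsGT_of_mem ⟨le_refl t, by linarith⟩
      refine ((hev1.and hev2).mono ?_).frequently
      rintro z ⟨hz1, hz2⟩
      have hhpos : 0 < z - t := sub_pos.2 hz2.1
      have hhle : z - t ≤ h₀ := by linarith [hz2.2]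
      have hCb : ∀ y ∈ segment ℝ (xhat t) (x t),
          opNorm N (1 + (z - t) • A t y) ≤ 1 + (z - t) * (c + ε) := by
        intro y hy
        have hb2 := hbound2 y hy (z - t) hhpos hhle
        rw [div_lt_iff₀ hhpos] at hb2
        linarith
      have hmvt := hN.mvt hn hX (hx t ht0).2 (hxhat t ht0).2
        (fun y hy => hψd t ht0 (z - t) y hy) hCb
      have hψeq : (x t + (z - t) • Fc t (x t)) - (xhat t + (z - t) • Fc t (xhat t))
          = (x t - xhat t) + (z - t) • d := by
        rw [hd, smul_sub]
        abel
      rw [hψeq] at hmvt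
      -- triangle inequality
      have htri : φ z ≤ N ((x z - xhat z) - ((x t - xhat t) + (z - t) • d))
          + (1 + (z - t) * (c + ε)) * φ t := by
        have h1 := hN.2.2 ((x z - xhat z) - ((x t - xhat t) + (z - t) • d))
          ((x t - xhat t) + (z - t) • d)
        have h2 : ((x z - xhat z) - ((x t - xhat t) + (z - t) • d))
            + ((x t - xhat t) + (z - t) • d) = x z - xhat z := by abel
        rw [h2] at h1
        exact le_trans h1 (by linarith [hmvt])
      -- homogeneity
      have hhom : (z - t)⁻¹ * N ((x z - xhat z) - ((x t - xhat t) + (z - t) • d))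
          = N (slope (fun s => x s - xhat s) t z - d) := by
        have h1 : slope (fun s => x s - xhat s) t z - d
            = (z - t)⁻¹ • ((x z - xhat z) - ((x t - xhat t) + (z - t) • d)) := by
          have key : (z - t)⁻¹ • ((z - t) • d) = d := by
            rw [smul_smul, inv_mul_cancel₀ hhpos.ne', one_smul]
          rw [slope_def_module,
            smul_sub ((z - t)⁻¹) (x z - xhat z) ((x t - xhat t) + (z - t) • d),
            smul_add ((z - t)⁻¹) (x t - xhat t) ((z - t) • d), key,
            smul_sub ((z - t)⁻¹) (x z - xhat z) (x t - xhat t)]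
          abel
        rw [h1, hN.2.1, abs_of_pos (inv_pos.2 hhpos)]
      have hfin : (z - t)⁻¹ * (φ z - φ t)
          ≤ N (slope (fun s => x s - xhat s) t z - d) + (c + ε) * φ t := by
        have h1 : φ z - φ t ≤ N ((x z - xhat z) - ((x t - xhat t) + (z - t) • d))
            + (z - t) * ((c + ε) * φ t) := by
          have := htri
          nlinarith [hN.nonneg_s11 (x t - xhat t)]
        have h2 := mul_le_mul_of_nonneg_left h1 (inv_pos.2 hhpos).le
        rw [mul_add, hhom] at h2
        calc (z - t)⁻¹ * (φ z - φ t)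
            ≤ N (slope (fun s => x s - xhat s) t z - d)
              + (z - t)⁻¹ * ((z - t) * ((c + ε) * φ t)) := h2
          _ = N (slope (fun s => x s - xhat s) t z - d) + (c + ε) * φ t := by
              rw [← mul_assoc, inv_mul_cancel₀ hhpos.ne', one_mul]
      linarith [hfin, hz1]
    have hbound : ∀ s ∈ Ico 0 T, (c + ε) * φ s ≤ (c + ε) * φ s + 0 := by
      intro s hs
      simp
    have key := le_gronwallBound_of_liminf_deriv_right_le (f := φ)
      (f' := fun s => (c + ε) * φ s) (δ := φ 0) (K := c + ε) (ε := 0)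
      hφcont hdini (le_refl _) hbound T ⟨hT, le_refl T⟩
    rwa [sub_zero, gronwallBound_ε0] at key
  -- take ε → 0⁺
  have hTend : Tendsto (fun ε : ℝ => φ 0 * Real.exp ((c + ε) * T)) (nhdsWithin 0 (Ioi 0))
      (nhds (φ 0 * Real.exp (c * T))) := by
    have hcont : Continuous fun ε : ℝ => φ 0 * Real.exp ((c + ε) * T) :=
      continuous_const.mul (Real.continuous_exp.comp
        ((continuous_const.add continuous_id).mul continuous_const))
    have h1 := hcont.tendsto 0
    have h2 := h1.mono_left (nhdsWithin_le_nhds : nhdsWithin (0:ℝ) (Ioi 0) ≤ nhds 0)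
    simpa using h2
  have hfinal : φ T ≤ φ 0 * Real.exp (c * T) :=
    ge_of_tendsto hTend (Filter.eventually_of_mem self_mem_nhdsWithin
      (fun ε hε => main ε hε))
  rw [mul_comm] at hfinal
  exact hfinal
end

section
/- If βⱼ > 0 for all j = 1,…,n−1 (and βₙ := 1), then the one-norm matrix measure of the traffic Jacobian satisfies μ₁(J(t,x)) ≤ −ν · min_j βⱼ < 0 for all t ≥ 0 and x ∈ 𝒳, so the traffic dynamics are contractive with respect to the one-norm. -/
open Finset

/-- if `βⱼ > 0` for all `j = 1,…,n−1` (and `βₙ := 1`), then the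
one-norm matrix measure of the traffic Jacobian `J = J₁ + J₂` satisfies
`μ₁(J(t,x)) ≤ −ν · min_j βⱼ < 0`, so the traffic dynamics are contractive with
respect to the one-norm. Here `μ₁(A) = max_j (A_{jj} + Σ_{i≠j}|A_{ij}|)`,
`a i = ∂ᵢpᵢ ≥ 0`, `b i = ∂_{i+1}pᵢ ≤ 0`, `dp0 = ∂₁p₀ ≤ 0`, `Dp i = Dᵢ′ ≥ ν`,
and `βe j = βⱼ` for `j < n−1` with `βe (n−1) = 1`. -/
theorem traffic_contractive_one_norm (n : ℕ) (hn : 2 ≤ n)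
    (a b Dp β : ℕ → ℝ) (dp0 : ℝ) (ν : ℝ) (hν : 0 < ν)
    (ha : ∀ i, 0 ≤ a i) (hb : ∀ i, b i ≤ 0) (hdp0 : dp0 ≤ 0)
    (hDp : ∀ i, ν ≤ Dp i) (hβ : ∀ i, 0 < β i ∧ β i ≤ 1)
    (J : Matrix (Fin n) (Fin n) ℝ)
    (hJ : ∀ i j : Fin n, J i j =
      if (i : ℕ) = (j : ℕ) then
        (if (i : ℕ) = 0 then dp0 - a 0
         else if (i : ℕ) = n - 1 then b (n - 2)
         else b ((i : ℕ) - 1) - a (i : ℕ))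
        - (if (i : ℕ) = n - 1 then Dp (n - 1) else β (i : ℕ) * Dp (i : ℕ))
      else if (i : ℕ) = (j : ℕ) + 1 then a (j : ℕ)
      else if (j : ℕ) = (i : ℕ) + 1 then -b (i : ℕ)
      else 0) :
    (⨆ j : Fin n, (J j j + ∑ i ∈ Finset.univ.erase j, |J i j|)) ≤
        -(ν * ⨅ j : Fin n, (if (j : ℕ) = n - 1 then (1 : ℝ) else β (j : ℕ))) ∧
      -(ν * ⨅ j : Fin n, (if (j : ℕ) = n - 1 then (1 : ℝ) else β (j : ℕ))) < 0 := by
  haveI : Nonempty (Fin n) := ⟨⟨0, by omega⟩⟩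
  set f : Fin n → ℝ := fun j => if (j : ℕ) = n - 1 then (1 : ℝ) else β (j : ℕ) with hfdef
  have hfpos : ∀ j, 0 < f j := by
    intro j; simp only [hfdef]; split
    · norm_num
    · exact (hβ _).1
  have hinf_pos : 0 < ⨅ j, f j := by
    obtain ⟨j0, hj0⟩ := exists_eq_ciInf_of_finite (f := f)
    rw [← hj0]; exact hfpos j0
  have hinf_le : ∀ j, (⨅ j, f j) ≤ f j := fun j =>
    ciInf_le (Finite.bddBelow_range f) j
  constructor
  · apply ciSup_le
    intro j
    have hbound : J j j + ∑ i ∈ Finset.univ.erase j, |J i j| ≤ -(ν * f j) := by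
      rcases Nat.eq_zero_or_pos (j : ℕ) with hj0 | hjpos
      · -- j = 0
        have hjn : (j : ℕ) ≠ n - 1 := by omega
        have h1n : 1 < n := by omega
        set i1 : Fin n := ⟨1, h1n⟩ with hi1
        have hsum : ∑ i ∈ Finset.univ.erase j, |J i j| = |J i1 j| := by
          apply Finset.sum_eq_single_of_mem
          · simp [Finset.mem_erase, hi1, Fin.ext_iff, hj0]
          · intro k hk hki
            have hkj : (k : ℕ) ≠ (j : ℕ) := by
              intro h; exact (Finset.mem_erase.1 hk).1 (Fin.ext h)
            have hk1 : (k : ℕ) ≠ (j : ℕ) + 1 := by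
              intro h; apply hki; apply Fin.ext; simp [hi1, h, hj0]
            have hk2 : (j : ℕ) ≠ (k : ℕ) + 1 := by omega
            rw [hJ k j, if_neg hkj, if_neg hk1, if_neg hk2, abs_zero]
        have hJi1 : J i1 j = a 0 := by
          rw [hJ i1 j]
          simp only [hi1, hj0]
          norm_num
        have hne0 : (0:ℕ) ≠ n - 1 := by omega
        have hJjj : J j j = dp0 - a 0 - β 0 * Dp 0 := by
          rw [hJ j j, hj0]; simp [hne0]
        rw [hsum, hJi1, hJjj, abs_of_nonneg (ha 0)]
        have hfj : f j = β 0 := by simp only [hfdef]; rw [hj0, if_neg hne0]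
        rw [hfj]
        have h1 : ν * β 0 ≤ β 0 * Dp 0 := by
          rw [mul_comm]
          exact mul_le_mul_of_nonneg_left (hDp 0) (hβ 0).1.le
        linarith
      · rcases eq_or_ne (j : ℕ) (n - 1) with hjn | hjn
        · -- j = n - 1
          set i0 : Fin n := ⟨n - 2, by omega⟩ with hi0
          have hsum : ∑ i ∈ Finset.univ.erase j, |J i j| = |J i0 j| := by
            apply Finset.sum_eq_single_of_mem
            · simp only [Finset.mem_erase, Finset.mem_univ, and_true]
              intro h; rw [h] at hi0
              have := congrArg Fin.val hi0; simp at this; omega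
            · intro k hk hki
              have hkj : (k : ℕ) ≠ (j : ℕ) := by
                intro h; exact (Finset.mem_erase.1 hk).1 (Fin.ext h)
              have hk1 : (k : ℕ) ≠ (j : ℕ) + 1 := by
                intro h; have := k.isLt; omega
              have hk2 : (j : ℕ) ≠ (k : ℕ) + 1 := by
                intro h
                apply hki; apply Fin.ext
                simp only [hi0]; omega
              rw [hJ k j, if_neg hkj, if_neg hk1, if_neg hk2, abs_zero]
          have hJi0 : J i0 j = -b (n - 2) := by
            rw [hJ i0 j]
            have h1 : ((i0 : ℕ)) ≠ (j : ℕ) := by simp only [hi0]; omega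
            have h2 : ((i0 : ℕ)) ≠ (j : ℕ) + 1 := by simp only [hi0]; omega
            have h3 : ((j : ℕ)) = (i0 : ℕ) + 1 := by simp only [hi0]; omega
            rw [if_neg h1, if_neg h2, if_pos h3]
          have hJjj : J j j = b (n - 2) - Dp (n - 1) := by
            rw [hJ j j]; simp [hjn, (show n - 1 ≠ 0 by omega)]
          rw [hsum, hJi0, hJjj, abs_of_nonneg (by linarith [hb (n - 2)])]
          have hfj : f j = 1 := by simp [hfdef, hjn]
          rw [hfj, mul_one]
          linarith [hDp (n - 1)]
        · -- middle: 0 < j < n - 1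
          have hjlt : (j : ℕ) < n - 1 := by have := j.isLt; omega
          set i0 : Fin n := ⟨(j : ℕ) - 1, by omega⟩ with hi0
          set i1 : Fin n := ⟨(j : ℕ) + 1, by omega⟩ with hi1
          have hsum : ∑ i ∈ Finset.univ.erase j, |J i j| = |J i0 j| + |J i1 j| := by
            apply Finset.sum_eq_add_of_mem
            · simp only [Finset.mem_erase, Finset.mem_univ, and_true]
              intro h; have := congrArg Fin.val h; simp [hi0] at this; omega
            · simp only [Finset.mem_erase, Finset.mem_univ, and_true]
              intro h; have := congrArg Fin.val h; simp [hi1] at this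
            · intro h; have := congrArg Fin.val h; simp only [hi0, hi1] at this; omega
            · intro k hk hk01
              obtain ⟨hk0, hk1⟩ := hk01
              have hkj : (k : ℕ) ≠ (j : ℕ) := by
                intro h; exact (Finset.mem_erase.1 hk).1 (Fin.ext h)
              have hka : (k : ℕ) ≠ (j : ℕ) + 1 := by
                intro h; apply hk1; apply Fin.ext; simp [hi1, h]
              have hkb : (j : ℕ) ≠ (k : ℕ) + 1 := by
                intro h; apply hk0; apply Fin.ext; simp [hi0]; omega
              rw [hJ k j, if_neg hkj, if_neg hka, if_neg hkb, abs_zero]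
          have hJi0 : J i0 j = -b ((j : ℕ) - 1) := by
            rw [hJ i0 j]
            have h1 : ((i0 : ℕ)) ≠ (j : ℕ) := by simp only [hi0]; omega
            have h2 : ((i0 : ℕ)) ≠ (j : ℕ) + 1 := by simp only [hi0]; omega
            have h3 : ((j : ℕ)) = (i0 : ℕ) + 1 := by simp only [hi0]; omega
            rw [if_neg h1, if_neg h2, if_pos h3]
          have hJi1 : J i1 j = a (j : ℕ) := by
            rw [hJ i1 j]
            have h1 : ((i1 : ℕ)) ≠ (j : ℕ) := by simp [hi1]
            have h2 : ((i1 : ℕ)) = (j : ℕ) + 1 := by simp [hi1]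
            rw [if_neg h1, if_pos h2]
          have hJjj : J j j = b ((j : ℕ) - 1) - a (j : ℕ) - β (j : ℕ) * Dp (j : ℕ) := by
            rw [hJ j j]
            rw [if_pos rfl, if_neg (by omega), if_neg hjn, if_neg hjn]
          rw [hsum, hJi0, hJi1, hJjj,
            abs_of_nonneg (by linarith [hb ((j : ℕ) - 1)]), abs_of_nonneg (ha _)]
          have hfj : f j = β (j : ℕ) := by simp [hfdef, hjn]
          rw [hfj]
          have h1 : ν * β (j : ℕ) ≤ β (j : ℕ) * Dp (j : ℕ) := by
            rw [mul_comm]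
            exact mul_le_mul_of_nonneg_left (hDp _) (hβ _).1.le
          linarith
    calc J j j + ∑ i ∈ Finset.univ.erase j, |J i j| ≤ -(ν * f j) := hbound
      _ ≤ -(ν * ⨅ j, f j) := by
          apply neg_le_neg
          exact mul_le_mul_of_nonneg_left (hinf_le j) hν.le
  · have : 0 < ν * ⨅ j, f j := mul_pos hν hinf_pos
    linarith
end
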